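/- arXiv:1711.10196 — 4 statements merged into one kernel-verified Lean document; each statement's English description precedes it below -/
import Mathlib

section
/- Let l ∈ ℕ, α > 0 and (Σ_n)_n ∈ CovMat(α). Let δ_1,…,δ_l ∈ ℕ with δ_1+⋯+δ_l even, fix n ∈ ℕ with l ≤ Δ_n, and pick integers i(1),…,i(δ_1+⋯+δ_l) ∈ {1,…,Δ_n} such that i(1) = ⋯ = i(δ_1), i(δ_1+1) = ⋯ = i(δ_1+δ_2), …, i(δ_1+⋯+δ_{l−1}+1) = ⋯ = i(δ_1+⋯+δ_l), while i(1), i(δ_1+1), …, i(δ_1+⋯+δ_{l−1}+1) are pairwise distinct. Then |∑_{π∈𝒫𝒫(δ_1+⋯+δ_l)} ∏_{{r,s}∈π} Σ_{Δ_n}(i(r),i(s))| ≤ #𝒫𝒫(δ_1+⋯+δ_l) / (n/√2)^{α·#{i : δ_i = 1}}. -/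
open MeasureTheory ProbabilityTheory Filter Finset
open scoped BigOperators ENNReal NNReal Classical

noncomputable section

namespace RMT

variable {Ω : Type} [MeasurableSpace Ω]

/-- A triangular scheme: for each `n`, a symmetric `n × n` matrix of (measurable) real-valued
random variables, with entries indexed by `{1, …, n}²`. -/
def IsTriangularScheme (a : ℕ → ℕ → ℕ → Ω → ℝ) : Prop :=
  ∀ n p q, p ∈ Finset.Icc 1 n → q ∈ Finset.Icc 1 n →
    a n p q = a n q p ∧ Measurable (a n p q)

/-- Condition (AAU1): distinct decay and boundedness, with constants `C k` and decay
parameter `α`.  The pairs `pq i` range over `{1,…,N}²`, are pairwise fundamentally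
different (i.e. distinct as unordered pairs), and `δ i ≥ 1` are the multiplicities. -/
def AAU1 (P : Measure Ω) (a : ℕ → ℕ → ℕ → Ω → ℝ) (α : ℝ) (C : ℕ → ℝ) : Prop :=
  ∀ (N l : ℕ) (pq : Fin l → ℕ × ℕ),
    (∀ i, (pq i).1 ∈ Finset.Icc 1 N ∧ (pq i).2 ∈ Finset.Icc 1 N) →
    (∀ i j, i ≠ j → s((pq i).1, (pq i).2) ≠ s((pq j).1, (pq j).2)) →
    ∀ n, N ≤ n → ∀ δ : Fin l → ℕ, (∀ i, 1 ≤ δ i) →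
      |∫ ω, ∏ i, a n (pq i).1 (pq i).2 ω ^ δ i ∂P| ≤
        C (∑ i, δ i) / (n : ℝ) ^ (α * ((Finset.univ.filter fun i => δ i = 1).card : ℝ))

/-- Condition (AAU2): second moment condition with constants `C' l n`. -/
def AAU2 (P : Measure Ω) (a : ℕ → ℕ → ℕ → Ω → ℝ) (C' : ℕ → ℕ → ℝ) : Prop :=
  ∀ (N l : ℕ) (pq : Fin l → ℕ × ℕ),
    (∀ i, (pq i).1 ∈ Finset.Icc 1 N ∧ (pq i).2 ∈ Finset.Icc 1 N) →
    (∀ i j, i ≠ j → s((pq i).1, (pq i).2) ≠ s((pq j).1, (pq j).2)) →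
    ∀ n, N ≤ n →
      |(∫ ω, ∏ i, a n (pq i).1 (pq i).2 ω ^ 2 ∂P) - 1| ≤ C' l n

/-- Condition (AAU3): fourth moment condition with constants `D l n`. -/
def AAU3 (P : Measure Ω) (a : ℕ → ℕ → ℕ → Ω → ℝ) (D : ℕ → ℕ → ℝ) : Prop :=
  ∀ (N l : ℕ) (hl : 0 < l) (pq : Fin l → ℕ × ℕ),
    (∀ i, (pq i).1 ∈ Finset.Icc 1 N ∧ (pq i).2 ∈ Finset.Icc 1 N) →
    (∀ i j, i ≠ j → s((pq i).1, (pq i).2) ≠ s((pq j).1, (pq j).2)) →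
    ∀ n, N ≤ n →
      |∫ ω, a n (pq ⟨0, hl⟩).1 (pq ⟨0, hl⟩).2 ω ^ 4 *
          ((∏ i ∈ Finset.univ.erase ⟨0, hl⟩, a n (pq i).1 (pq i).2 ω ^ 2) - 1) ∂P| ≤ D l n

/-- `α`-almost uncorrelated triangular scheme. -/
def AlmostUncorrelated (P : Measure Ω) (a : ℕ → ℕ → ℕ → Ω → ℝ) (α : ℝ) : Prop :=
  ∃ (C : ℕ → ℝ) (C' : ℕ → ℕ → ℝ),
    (∀ m, Tendsto (fun n => C' m n) atTop (nhds 0)) ∧ AAU1 P a α C ∧ AAU2 P a C'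

/-- Strongly `α`-almost uncorrelated triangular scheme. -/
def StronglyAlmostUncorrelated (P : Measure Ω) (a : ℕ → ℕ → ℕ → Ω → ℝ) (α : ℝ) : Prop :=
  ∃ (C : ℕ → ℝ) (C' D : ℕ → ℕ → ℝ),
    (∀ m, Tendsto (fun n => C' m n) atTop (nhds 0)) ∧
    (∀ m, Tendsto (fun n => D m n) atTop (nhds 0)) ∧
    AAU1 P a α C ∧ AAU2 P a C' ∧ AAU3 P a D

/-- Approximately uncorrelated triangular scheme (Hochstättler–Kirsch–Warzel). -/
def ApproxUncorrelated (P : Measure Ω) (a : ℕ → ℕ → ℕ → Ω → ℝ) : Prop :=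
  ∃ (K : ℕ → ℕ → ℝ) (K' : ℕ → ℕ → ℝ),
    (∀ s m, 0 ≤ K s m) ∧ (∀ s n, 0 ≤ K' s n) ∧
    (∀ s, Tendsto (fun n => K' s n) atTop (nhds 0)) ∧
    ∀ (N s m : ℕ) (pq : Fin (s + m) → ℕ × ℕ),
      (∀ i, (pq i).1 ∈ Finset.Icc 1 N ∧ (pq i).2 ∈ Finset.Icc 1 N) →
      (∀ i j : Fin (s + m), (i : ℕ) < s → i ≠ j →
        s((pq i).1, (pq i).2) ≠ s((pq j).1, (pq j).2)) →
      ∀ n, N ≤ n →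
        |∫ ω, ∏ i, a n (pq i).1 (pq i).2 ω ∂P| ≤ K s m / (n : ℝ) ^ ((s : ℝ) / 2) ∧
        |(∫ ω, ∏ i ∈ Finset.univ.filter (fun i : Fin (s + m) => (i : ℕ) < s),
            a n (pq i).1 (pq i).2 ω ^ 2 ∂P) - 1| ≤ K' s n

/-- A Wigner scheme: independent entries (up to symmetry), centered, unit variance,
with uniformly bounded moments of all orders. -/
def IsWignerScheme (P : Measure Ω) (a : ℕ → ℕ → ℕ → Ω → ℝ) : Prop :=
  IsTriangularScheme a ∧
  (∀ n : ℕ, iIndepFun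
      (fun ij : {p : ℕ × ℕ // 1 ≤ p.1 ∧ p.1 ≤ p.2 ∧ p.2 ≤ n} => a n ij.1.1 ij.1.2) P) ∧
  (∀ n, ∀ p ∈ Finset.Icc 1 n, ∀ q ∈ Finset.Icc 1 n,
      (∫ ω, a n p q ω ∂P) = 0 ∧ (∫ ω, a n p q ω ^ 2 ∂P) = 1) ∧
  (∀ k : ℕ, ∃ Cp : ℝ, ∀ n, ∀ p ∈ Finset.Icc 1 n, ∀ q ∈ Finset.Icc 1 n,
      (∫ ω, |a n p q ω| ^ k ∂P) ≤ Cp)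

/-- `b` is an `n`-bandwidth: an odd number `< n`, or `n` itself. -/
def IsBandwidth (n b : ℕ) : Prop := (b < n ∧ Odd b) ∨ b = n

/-- The pair `(i,j) ∈ {1,…,n}²` is `bn`-relevant. -/
def BRelevant (n bn i j : ℕ) : Prop :=
  bn = n ∨ |(i : ℤ) - (j : ℤ)| ≤ ((bn - 1) / 2 : ℕ) ∨
    (n : ℤ) - ((bn - 1) / 2 : ℕ) ≤ |(i : ℤ) - (j : ℤ)|

/-- The periodic random band matrix of dimension `n × n` based on the scheme `a` with
bandwidths `b` : entries `X_n(p,q) = b_n^{-1/2} a_n(p,q)` for `b_n`-relevant `(p,q)`, else `0`. -/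
def bandMatrix (a : ℕ → ℕ → ℕ → Ω → ℝ) (b : ℕ → ℕ) (n : ℕ) (ω : Ω) :
    Matrix (Fin n) (Fin n) ℝ := fun i j =>
  if BRelevant n (b n) (i.1 + 1) (j.1 + 1)
  then (Real.sqrt (b n))⁻¹ * a n (i.1 + 1) (j.1 + 1) ω else 0

/-- The empirical spectral distribution of a real symmetric matrix
(junk value `0` if the matrix is not symmetric). -/
def ESD {n : ℕ} (M : Matrix (Fin n) (Fin n) ℝ) : Measure ℝ :=
  if h : M.IsHermitian then
    ((n : ℝ≥0∞))⁻¹ • ∑ i : Fin n, Measure.dirac (h.eigenvalues i)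
  else 0

/-- The semicircle distribution, with Lebesgue density
`(2π)⁻¹ √(4 - x²) 1_{[-2,2]}(x)`. -/
def semicircle : Measure ℝ :=
  volume.withDensity fun x =>
    ENNReal.ofReal (if -2 ≤ x ∧ x ≤ 2 then (2 * Real.pi)⁻¹ * Real.sqrt (4 - x ^ 2) else 0)

/-- The semicircle law holds in probability for the random matrices `X n`. -/
def SemicircleLawInProbability (P : Measure Ω)
    (X : (n : ℕ) → Ω → Matrix (Fin n) (Fin n) ℝ) : Prop :=
  ∀ f : BoundedContinuousFunction ℝ ℝ,
    TendstoInMeasure P (fun n ω => ∫ x, f x ∂ ESD (X n ω)) atTop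
      (fun _ => ∫ x, f x ∂ semicircle)

/-- The semicircle law holds almost surely for the random matrices `X n`. -/
def SemicircleLawAS (P : Measure Ω)
    (X : (n : ℕ) → Ω → Matrix (Fin n) (Fin n) ℝ) : Prop :=
  ∀ f : BoundedContinuousFunction ℝ ℝ,
    ∀ᵐ ω ∂P, Tendsto (fun n => ∫ x, f x ∂ ESD (X n ω)) atTop
      (nhds (∫ x, f x ∂ semicircle))

/-- The family `Y` is Curie-Weiss(`β`, `card ι`)-distributed. -/
def IsCurieWeiss {ι : Type} [Fintype ι] (P : Measure Ω) (β : ℝ) (Y : ι → Ω → ℝ) : Prop :=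
  (∀ i, Measurable (Y i)) ∧
  (∀ᵐ ω ∂P, ∀ i, Y i ω = 1 ∨ Y i ω = -1) ∧
  ∃ Z : ℝ, 0 < Z ∧ ∀ y : ι → ℝ, (∀ i, y i = 1 ∨ y i = -1) →
    P {ω | ∀ i, Y i ω = y i} =
      ENNReal.ofReal (Z⁻¹ * Real.exp (β / (2 * Fintype.card ι) * (∑ i, y i) ^ 2))

/-- `Δ n = n (n+1) / 2`. -/
def Δn (n : ℕ) : ℕ := n * (n + 1) / 2

/-- Pair partitions of `{1, …, k}`, encoded as fixed-point-free involutions of `Fin k`. -/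
def PairPartitions (k : ℕ) : Finset (Equiv.Perm (Fin k)) :=
  Finset.univ.filter fun π => ∀ r, π (π r) = r ∧ π r ≠ r

/-- The product `∏_{{r,s} ∈ π} S (i r) (i s)` over the blocks of a pair partition `π`. -/
def pairProd {k m : ℕ} (S : Matrix (Fin m) (Fin m) ℝ) (i : Fin k → Fin m)
    (π : Equiv.Perm (Fin k)) : ℝ :=
  ∏ r ∈ Finset.univ.filter (fun r => r < π r), S (i r) (i (π r))

/-- `(Σ_n)_n ∈ CovMat(α)`: symmetric positive definite, unit diagonal, off-diagonal
entries bounded by `n^{-α}`. -/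
def CovMatSeq (α : ℝ) (S : ∀ n : ℕ, Matrix (Fin n) (Fin n) ℝ) : Prop :=
  ∀ n, (S n).IsSymm ∧ (S n).PosDef ∧ (∀ i, S n i i = 1) ∧
    ∀ i j : Fin n, i ≠ j → |S n i j| ≤ 1 / (n : ℝ) ^ α

/-- Position `r` (0-based) lies in the `j`-th block of sizes `δ 0, δ 1, …`. -/
def inBlock {l : ℕ} (δ : Fin l → ℕ) (j : Fin l) (r : ℕ) : Prop :=
  (∑ j' ∈ Finset.univ.filter (· < j), δ j') ≤ r ∧
    r < ∑ j' ∈ Finset.univ.filter (· ≤ j), δ j'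

/-- The family `Y` is a centered Gaussian family with covariance matrix `S`:
every linear combination is a centered real Gaussian with the corresponding variance. -/
def IsCenteredGaussianFamily (P : Measure Ω) {m : ℕ}
    (Y : Fin m → Ω → ℝ) (S : Matrix (Fin m) (Fin m) ℝ) : Prop :=
  (∀ i, Measurable (Y i)) ∧
  ∀ c : Fin m → ℝ,
    Measure.map (fun ω => ∑ i, c i * Y i ω) P =
      gaussianReal 0 (Real.toNNReal (∑ i, ∑ j, c i * S i j * c j))

/-- The Gaussian triangular scheme `a` constructed from a covariance sequence `S`
via a filling bijection `φ` (with values in `{1,…,Δ_n}`) and Gaussian vectors `Y`. -/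
def GaussianScheme (P : Measure Ω) (S : ∀ m, Matrix (Fin m) (Fin m) ℝ)
    (φ : ℕ → ℕ → ℕ → ℕ) (Y : ℕ → ℕ → Ω → ℝ) (a : ℕ → ℕ → ℕ → Ω → ℝ) : Prop :=
  (∀ n, Set.BijOn (fun p : ℕ × ℕ => φ n p.1 p.2)
      {p : ℕ × ℕ | 1 ≤ p.1 ∧ p.1 ≤ p.2 ∧ p.2 ≤ n} (Set.Icc 1 (Δn n))) ∧
  (∀ n i j, j < i → φ n i j = φ n j i) ∧
  (∀ n, IsCenteredGaussianFamily P (fun t : Fin (Δn n) => Y n (t.1 + 1)) (S (Δn n))) ∧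
  (∀ n i j, a n i j = Y n (φ n i j))

/-- Cyclic successor on `Fin k`. -/
def cyc {k : ℕ} (i : Fin k) : Fin k :=
  ⟨(i.1 + 1) % k, Nat.mod_lt _ (Nat.lt_of_le_of_lt (Nat.zero_le _) i.isLt)⟩

/-- The multiset of edges of the cyclic multigraph of the tuple `t`. -/
def tupleEdges {k : ℕ} (t : Fin k → ℕ) : Multiset (Sym2 ℕ) :=
  Finset.univ.val.map fun i : Fin k => s(t i, t (cyc i))

/-- `kappa t l` = number of distinct `l`-fold edges of `t`. -/
def kappa {k : ℕ} (t : Fin k → ℕ) (l : ℕ) : ℕ :=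
  ((tupleEdges t).toFinset.filter fun e => (tupleEdges t).count e = l).card

/-- Number of distinct loops of `t`. -/
def numLoops {k : ℕ} (t : Fin k → ℕ) : ℕ :=
  ((tupleEdges t).toFinset.filter fun e => e.IsDiag).card

/-- `t` has at least one odd edge. -/
def hasOddEdge {k : ℕ} (t : Fin k → ℕ) : Prop :=
  ∃ e ∈ (tupleEdges t).toFinset, Odd ((tupleEdges t).count e)

/-- `t` has only even edges. -/
def hasOnlyEvenEdges {k : ℕ} (t : Fin k → ℕ) : Prop :=
  ∀ e ∈ (tupleEdges t).toFinset, Even ((tupleEdges t).count e)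

/-- Vertex set of the tuple `t`. -/
def verts {k : ℕ} (t : Fin k → ℕ) : Finset ℕ := Finset.image t Finset.univ

/-- The set of `bn`-relevant `k`-tuples with entries in `{1,…,n}`. -/
def relTuples (n bn k : ℕ) : Finset (Fin k → ℕ) :=
  (Fintype.piFinset fun _ : Fin k => Finset.Icc 1 n).filter
    fun t => ∀ i : Fin k, BRelevant n bn (t i) (t (cyc i))

/-- `t` and `s` have the same profile `κ`. -/
def sameProfile {k : ℕ} (t s : Fin k → ℕ) : Prop :=
  ∀ l ∈ Finset.Icc 1 k, kappa t l = kappa s l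

/-- Equivalence class `𝒯(s)` of `s` in `[n]^k_b`. -/
def Tclass (n bn k : ℕ) (s : Fin k → ℕ) : Finset (Fin k → ℕ) :=
  (relTuples n bn k).filter fun t => sameProfile t s

/-- `𝒯^c(s,s')`: pairs of tuples with prescribed profiles having a common edge. -/
def Tcommon (n bn k : ℕ) (s s' : Fin k → ℕ) : Finset ((Fin k → ℕ) × (Fin k → ℕ)) :=
  ((relTuples n bn k) ×ˢ (relTuples n bn k)).filter fun tt =>
    sameProfile tt.1 s ∧ sameProfile tt.2 s' ∧
      ((tupleEdges tt.1).toFinset ∩ (tupleEdges tt.2).toFinset).Nonempty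

/-- `𝒯^c_l(s,s')`: pairs in `𝒯^c(s,s')` with exactly `l` common edges. -/
def TcommonL (n bn k : ℕ) (s s' : Fin k → ℕ) (l : ℕ) :
    Finset ((Fin k → ℕ) × (Fin k → ℕ)) :=
  (Tcommon n bn k s s').filter fun tt =>
    ((tupleEdges tt.1).toFinset ∩ (tupleEdges tt.2).toFinset).card = l

private lemma sum_le_eq {l : ℕ} (δ : Fin l → ℕ) (j : Fin l) :
    ∑ j' ∈ Finset.univ.filter (· ≤ j), δ j' =
      δ j + ∑ j' ∈ Finset.univ.filter (· < j), δ j' := by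
  have h : Finset.univ.filter (· ≤ j) = insert j (Finset.univ.filter (· < j)) := by
    ext x
    simp [le_iff_lt_or_eq, or_comm]
  rw [h, Finset.sum_insert (by simp)]

private lemma exists_inBlock {l : ℕ} (hl : 0 < l) (δ : Fin l → ℕ) (r : ℕ)
    (hr : r < ∑ j, δ j) : ∃ j, inBlock δ j r := by
  classical
  have hne : (Finset.univ : Finset (Fin l)).Nonempty := ⟨⟨0, hl⟩, Finset.mem_univ _⟩
  set T := Finset.univ.filter fun j : Fin l =>
    r < ∑ j' ∈ Finset.univ.filter (· ≤ j), δ j' with hT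
  have hTne : T.Nonempty := by
    refine ⟨Finset.univ.max' hne, Finset.mem_filter.mpr ⟨Finset.mem_univ _, ?_⟩⟩
    have : Finset.univ.filter (· ≤ Finset.univ.max' hne) = (Finset.univ : Finset (Fin l)) := by
      ext x; simp [Finset.le_max' _ _ (Finset.mem_univ x)]
    rw [this]; exact hr
  set j₀ := T.min' hTne with hj₀
  have hj₀T : j₀ ∈ T := T.min'_mem hTne
  refine ⟨j₀, ?_, (Finset.mem_filter.mp hj₀T).2⟩
  by_contra hlow
  push_neg at hlow
  have hBne : (Finset.univ.filter (· < j₀)).Nonempty := by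
    by_contra hemp
    rw [Finset.not_nonempty_iff_eq_empty] at hemp
    rw [hemp, Finset.sum_empty] at hlow
    omega
  set j₁ := (Finset.univ.filter (· < j₀)).max' hBne with hj₁
  have hj₁lt : j₁ < j₀ := (Finset.mem_filter.mp ((Finset.univ.filter (· < j₀)).max'_mem hBne)).2
  have hsub : Finset.univ.filter (· < j₀) ⊆ Finset.univ.filter (· ≤ j₁) := by
    intro x hx
    simp only [Finset.mem_filter, Finset.mem_univ, true_and] at hx ⊢
    exact Finset.le_max' (Finset.univ.filter (· < j₀)) x
      (Finset.mem_filter.mpr ⟨Finset.mem_univ x, hx⟩)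
  have hle : ∑ j' ∈ Finset.univ.filter (· < j₀), δ j' ≤
      ∑ j' ∈ Finset.univ.filter (· ≤ j₁), δ j' :=
    Finset.sum_le_sum_of_subset hsub
  have hj₁T : j₁ ∈ T := Finset.mem_filter.mpr ⟨Finset.mem_univ _, by omega⟩
  exact absurd (T.min'_le _ hj₁T) (not_le.mpr hj₁lt)

private lemma inBlock_unique {l : ℕ} (δ : Fin l → ℕ) {j j' : Fin l} {r : ℕ}
    (h : inBlock δ j r) (h' : inBlock δ j' r) : j = j' := by
  by_contra hne
  have key : ∀ a b : Fin l, a < b →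
      ∑ j'' ∈ Finset.univ.filter (· ≤ a), δ j'' ≤
        ∑ j'' ∈ Finset.univ.filter (· < b), δ j'' := by
    intro a b hab
    apply Finset.sum_le_sum_of_subset
    intro x hx
    simp only [Finset.mem_filter, Finset.mem_univ, true_and] at hx ⊢
    exact lt_of_le_of_lt hx hab
  obtain ⟨h1, h2⟩ := h
  obtain ⟨h1', h2'⟩ := h'
  rcases lt_or_gt_of_ne hne with hlt | hlt
  · have := key j j' hlt; omega
  · have := key j' j hlt; omega

private lemma stmt9_aux (α : ℝ) (hα : 0 < α)
    (l : ℕ) (hl : 0 < l) (δ : Fin l → ℕ) (hδ : ∀ j, 1 ≤ δ j)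
    (n N : ℕ) (hΔ : Δn n = N) (hn : l ≤ N)
    (T : Matrix (Fin N) (Fin N) ℝ)
    (hdiag : ∀ x, T x x = 1)
    (hoff : ∀ x y : Fin N, x ≠ y → |T x y| ≤ 1 / (N : ℝ) ^ α)
    (k : ℕ) (hk : ∑ j, δ j = k) (m : ℕ)
    (hm : m = (Finset.univ.filter fun j => δ j = 1).card)
    (i : Fin k → Fin N)
    (hdist : ∀ (j j' : Fin l), j ≠ j' → ∀ (r r' : Fin k),
      inBlock δ j (r : ℕ) → inBlock δ j' (r' : ℕ) → i r ≠ i r') :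
    |∑ π ∈ PairPartitions k, pairProd T i π| ≤
      ((PairPartitions k).card : ℝ) /
        ((n : ℝ) / Real.sqrt 2) ^ (α * (m : ℝ)) := by
  classical
  have hN1 : 1 ≤ N := le_trans hl hn
  have hn0 : n ≠ 0 := by
    rintro rfl
    rw [← hΔ] at hN1
    simp [Δn] at hN1
  have hNr : (1 : ℝ) ≤ (N : ℝ) := by exact_mod_cast hN1
  set ε : ℝ := 1 / (N : ℝ) ^ α with hεdef
  have hNpow : (0 : ℝ) < (N : ℝ) ^ α := Real.rpow_pos_of_pos (by linarith) α
  have hεpos : 0 < ε := by positivity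
  have hε1 : ε ≤ 1 := by
    rw [hεdef, div_le_one hNpow]
    exact Real.one_le_rpow hNr hα.le
  have hentry : ∀ x y : Fin N, |T x y| ≤ if x = y then 1 else ε := by
    intro x y
    by_cases h : x = y
    · simp [h, hdiag]
    · simp only [if_neg h]
      exact hoff x y h
  -- block positions
  have hpk : ∀ j : Fin l, (∑ j' ∈ Finset.univ.filter (· < j), δ j') < k := by
    intro j
    have h1 : ∑ j' ∈ Finset.univ.filter (· ≤ j), δ j' ≤ k := by
      rw [← hk]
      exact Finset.sum_le_sum_of_subset (Finset.subset_univ _)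
    have h2 := sum_le_eq δ j
    have h3 := hδ j
    omega
  set rfin : Fin l → Fin k := fun j => ⟨_, hpk j⟩ with hrfin
  have hrb : ∀ j, inBlock δ j ((rfin j : Fin k) : ℕ) := by
    intro j
    refine ⟨le_refl _, ?_⟩
    rw [sum_le_eq]
    have := hδ j
    simp only [hrfin]
    omega
  have hrinj : ∀ j j' : Fin l, rfin j = rfin j' → j = j' := by
    intro j j' hjj
    have h1 := hrb j
    have h2 := hrb j'
    rw [hjj] at h1
    exact inBlock_unique δ h1 h2
  set B : ℝ := 1 / ((n : ℝ) / Real.sqrt 2) ^ (α * (m : ℝ)) with hB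
  have hbase : (0 : ℝ) < (n : ℝ) / Real.sqrt 2 := by
    have : (0 : ℝ) < (n : ℝ) := by
      have : 1 ≤ n := Nat.one_le_iff_ne_zero.mpr hn0
      exact_mod_cast Nat.lt_of_lt_of_le Nat.zero_lt_one this
    positivity
  have hbpow : (0 : ℝ) < ((n : ℝ) / Real.sqrt 2) ^ (α * (m : ℝ)) :=
    Real.rpow_pos_of_pos hbase _
  -- base comparison : n/√2 ≤ √N
  have hsq : ((n : ℝ) / Real.sqrt 2) ≤ Real.sqrt N := by
    rw [Real.le_sqrt hbase.le (Nat.cast_nonneg N)]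
    have h2N : 2 * N = n * (n + 1) := by
      rw [← hΔ, Δn, Nat.mul_div_cancel' (even_iff_two_dvd.mp (Nat.even_mul_succ_self n))]
    have h2Nr : (2 : ℝ) * (N : ℝ) = (n : ℝ) * ((n : ℝ) + 1) := by exact_mod_cast h2N
    have hs2 : Real.sqrt 2 ^ 2 = 2 := Real.sq_sqrt (by norm_num)
    rw [div_pow, hs2]
    rw [div_le_iff₀ (by norm_num)]
    nlinarith [Nat.cast_nonneg (α := ℝ) n]
  -- the key bound for each pair partition
  have key : ∀ π ∈ PairPartitions k, |pairProd (T) i π| ≤ B := by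
    intro π hπmem
    have hπ : ∀ r, π (π r) = r ∧ π r ≠ r := by
      simpa [PairPartitions] using hπmem
    set sfin := Finset.univ.filter (fun r : Fin k => r < π r) with hsfin
    set F := sfin.filter (fun r => ¬ i r = i (π r)) with hF
    have h1 : |pairProd (T) i π| ≤ ε ^ F.card := by
      rw [pairProd, Finset.abs_prod]
      calc ∏ r ∈ sfin, |T (i r) (i (π r))|
          ≤ ∏ r ∈ sfin, (if i r = i (π r) then 1 else ε) :=
            Finset.prod_le_prod (fun _ _ => abs_nonneg _) (fun r _ => hentry _ _)
        _ = ε ^ F.card := by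
            rw [← Finset.prod_filter_mul_prod_filter_not sfin (fun r => i r = i (π r))]
            rw [Finset.prod_eq_one (fun r hr => if_pos (Finset.mem_filter.mp hr).2), one_mul]
            rw [Finset.prod_congr rfl (fun r hr => if_neg (Finset.mem_filter.mp hr).2),
              Finset.prod_const, hF]
    -- combinatorics : m ≤ 2 * F.card
    have hcross : ∀ j : Fin l, δ j = 1 → i (rfin j) ≠ i (π (rfin j)) := by
      intro j hj1
      obtain ⟨j', hj'⟩ := exists_inBlock hl δ ((π (rfin j) : Fin k) : ℕ) (hk ▸ (π (rfin j)).isLt)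
      have hjne : j ≠ j' := by
        rintro rfl
        have hb := hj'
        obtain ⟨hb1, hb2⟩ := hb
        rw [sum_le_eq, hj1] at hb2
        have hval : ((π (rfin j) : Fin k) : ℕ) = ((rfin j : Fin k) : ℕ) := by
          have hvr : ((rfin j : Fin k) : ℕ) =
              ∑ j' ∈ Finset.univ.filter (· < j), δ j' := rfl
          omega
        exact (hπ (rfin j)).2 (Fin.ext hval)
      exact hdist j j' hjne _ _ (hrb j) hj'
    set f : Fin l → Fin k := fun j =>
      if rfin j < π (rfin j) then rfin j else π (rfin j) with hf
    have hmaps : ∀ j ∈ Finset.univ.filter (fun j => δ j = 1), f j ∈ F := by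
      intro j hj
      have hj1 : δ j = 1 := (Finset.mem_filter.mp hj).2
      by_cases hc : rfin j < π (rfin j)
      · rw [hF, hsfin]
        simp only [hf, if_pos hc, Finset.mem_filter, Finset.mem_univ, true_and]
        exact ⟨hc, hcross j hj1⟩
      · have hlt : π (rfin j) < rfin j :=
          lt_of_le_of_ne (not_lt.mp hc) (hπ (rfin j)).2
        rw [hF, hsfin]
        simp only [hf, if_neg hc, Finset.mem_filter, Finset.mem_univ, true_and,
          (hπ (rfin j)).1]
        exact ⟨hlt, fun h => hcross j hj1 h.symm⟩
    have hfiber : ∀ w ∈ F, ((Finset.univ.filter (fun j => δ j = 1)).filter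
        (fun j => f j = w)).card ≤ 2 := by
      intro w _
      have hcard2 : ({w, π w} : Finset (Fin k)).card ≤ 2 := by
        apply le_trans (Finset.card_insert_le _ _)
        simp
      refine le_trans (Finset.card_le_card_of_injOn rfin ?_ ?_) hcard2
      · intro j hj
        simp only [Finset.mem_coe, Finset.mem_filter] at hj
        obtain ⟨_, hfw⟩ := hj
        by_cases hc : rfin j < π (rfin j)
        · simp only [hf, if_pos hc] at hfw
          simp [hfw]
        · simp only [hf, if_neg hc] at hfw
          have : rfin j = π w := by rw [← hfw, (hπ (rfin j)).1]
          simp [this]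
      · intro a ha b hb hab
        exact hrinj a b hab
    have hcomb : m ≤ 2 * F.card := by
      rw [hm]
      exact Finset.card_le_mul_card_image_of_maps_to hmaps 2 hfiber
    -- numeric chain
    have hF2 : (m : ℝ) / 2 ≤ (F.card : ℝ) := by
      have : (m : ℝ) ≤ 2 * (F.card : ℝ) := by exact_mod_cast hcomb
      linarith
    have h2 : ε ^ F.card ≤ ε ^ ((m : ℝ) / 2) := by
      rw [← Real.rpow_natCast ε F.card]
      exact Real.rpow_le_rpow_of_exponent_ge hεpos hε1 hF2
    have h3 : ε ^ ((m : ℝ) / 2) ≤ B := by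
      have hNc : (0 : ℝ) ≤ (N : ℝ) := Nat.cast_nonneg _
      have e1 : ε ^ ((m : ℝ) / 2) = 1 / (Real.sqrt N) ^ (α * (m : ℝ)) := by
        rw [hεdef, Real.div_rpow (by norm_num) hNpow.le, Real.one_rpow,
          ← Real.rpow_mul hNc]
        have hexp : α * ((m : ℝ) / 2) = 1 / 2 * (α * (m : ℝ)) := by ring
        rw [hexp, Real.rpow_mul hNc, ← Real.sqrt_eq_rpow]
      rw [e1, hB]
      apply one_div_le_one_div_of_le hbpow
      exact Real.rpow_le_rpow hbase.le hsq (mul_nonneg hα.le (Nat.cast_nonneg _))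
    exact le_trans h1 (le_trans h2 h3)
  calc |∑ π ∈ PairPartitions k, pairProd (T) i π|
      ≤ ∑ π ∈ PairPartitions k, |pairProd (T) i π| := Finset.abs_sum_le_sum_abs _ _
    _ ≤ ∑ π ∈ PairPartitions k, B := Finset.sum_le_sum key
    _ = ((PairPartitions k).card : ℝ) * B := by rw [Finset.sum_const, nsmul_eq_mul]
    _ = ((PairPartitions k).card : ℝ) /
        ((n : ℝ) / Real.sqrt 2) ^ (α * (m : ℝ)) := by rw [hB, mul_one_div]



/-- Wick-sum bound for block-constant index tuples. -/
theorem stmt9 (α : ℝ) (hα : 0 < α) (S : ∀ n, Matrix (Fin n) (Fin n) ℝ)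
    (hS : CovMatSeq α S)
    (l : ℕ) (hl : 0 < l) (δ : Fin l → ℕ) (hδ : ∀ j, 1 ≤ δ j)
    (heven : Even (∑ j, δ j)) (n : ℕ) (hn : l ≤ Δn n)
    (i : Fin (∑ j, δ j) → Fin (Δn n))
    (hconst : ∀ (j : Fin l) (r r' : Fin (∑ j, δ j)),
      inBlock δ j (r : ℕ) → inBlock δ j (r' : ℕ) → i r = i r')
    (hdist : ∀ (j j' : Fin l), j ≠ j' → ∀ (r r' : Fin (∑ j, δ j)),
      inBlock δ j (r : ℕ) → inBlock δ j' (r' : ℕ) → i r ≠ i r') :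
    |∑ π ∈ PairPartitions (∑ j, δ j), pairProd (S (Δn n)) i π| ≤
      ((PairPartitions (∑ j, δ j)).card : ℝ) /
        ((n : ℝ) / Real.sqrt 2) ^ (α * ((Finset.univ.filter fun j => δ j = 1).card : ℝ)) := by
  obtain ⟨hsymm, hpd, hdiag, hoff⟩ := hS (Δn n)
  exact stmt9_aux α hα l hl δ hδ n (Δn n) rfl hn (S (Δn n)) hdiag hoff
    (∑ j, δ j) rfl _ rfl i hdist

end RMT
end
end

section
/- Let α > 0 and (Σ_n)_n ∈ CovMat(α). Let n, z ∈ ℕ with z ≤ Δ_n. Choose i(1),…,i(2z+2) ∈ {1,…,Δ_n} with i(1) = i(2) = i(3) = i(4), i(5) = i(6), i(7) = i(8), …, i(2z+1) = i(2z+2), and such that i(1), i(5), i(7), …, i(2z+1) are pairwise distinct. Then |∑_{π∈𝒫𝒫(2z+2)} ∏_{{r,s}∈π} Σ_{Δ_n}(i(r),i(s)) − 3| ≤ #𝒫𝒫(2z+2) / (n/√2)^{4α}. -/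
open MeasureTheory ProbabilityTheory Filter Finset
open scoped BigOperators ENNReal NNReal Classical

noncomputable section

namespace RMT

variable {Ω : Type} [MeasurableSpace Ω]

/-! ### Auxiliary material for Statement 11 -/

/-- swap within even/odd pairs. -/
def swp (r : ℕ) : ℕ := if r % 2 = 0 then r + 1 else r - 1

/-- the group (block) of position `r`. -/
def grp (r : ℕ) : ℕ := if r < 4 then 0 else (r - 2) / 2

/-- the three canonical diagonal pairings. -/
def ef (c r : ℕ) : ℕ :=
  if r < 4 then (if c = 0 then swp r else if c = 1 then (r + 2) % 4 else 3 - r)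
  else swp r

lemma ef_lt {z : ℕ} (hz : 0 < z) (c : ℕ) {r : ℕ} (hr : r < 2 * z + 2) :
    ef c r < 2 * z + 2 := by
  unfold ef swp; split_ifs <;> omega

lemma ef_invol (c r : ℕ) : ef c (ef c r) = r := by
  unfold ef swp; split_ifs <;> omega

lemma ef_ne (c r : ℕ) : ef c r ≠ r := by
  unfold ef swp; split_ifs <;> omega

lemma grp_ef (c r : ℕ) : grp (ef c r) = grp r := by
  unfold grp ef swp; split_ifs <;> omega

lemma swp_swp (r : ℕ) : swp (swp r) = r := by
  unfold swp; split_ifs <;> omega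

lemma grp_swp (r : ℕ) : grp (swp r) = grp r := by
  unfold grp swp; split_ifs <;> omega

lemma grp_lt {z r : ℕ} (hz : 0 < z) (hr : r < 2 * z + 2) : grp r < z := by
  unfold grp; split_ifs <;> omega

lemma grp_eq_cases {z x y : ℕ} (hx : x < 2 * z + 2) (hy : y < 2 * z + 2)
    (hy4 : 4 ≤ y) (h : grp x = grp y) : x = y ∨ x = swp y := by
  unfold grp swp at *; split_ifs at * <;> omega

/-- The three canonical diagonal pair partitions as permutations. -/
def Eperm (z : ℕ) (hz : 0 < z) (c : ℕ) : Equiv.Perm (Fin (2 * z + 2)) :=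
  Function.Involutive.toPerm (fun r => ⟨ef c r.1, ef_lt hz c r.isLt⟩)
    (fun r => Fin.ext (ef_invol c r.1))

lemma Eperm_apply (z : ℕ) (hz : 0 < z) (c : ℕ) (r : Fin (2 * z + 2)) :
    ((Eperm z hz c) r).1 = ef c r.1 := rfl

lemma prod_abs_le_sq {ι : Type*} [DecidableEq ι] (T : Finset ι) (x : ι → ℝ) {ε : ℝ}
    (t1 t2 : ι) (h1 : t1 ∈ T) (h2 : t2 ∈ T) (hne : t1 ≠ t2)
    (hall : ∀ t ∈ T, |x t| ≤ 1) (hb1 : |x t1| ≤ ε) (hb2 : |x t2| ≤ ε) :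
    |∏ t ∈ T, x t| ≤ ε ^ 2 := by
  have h0 : (0:ℝ) ≤ ε := le_trans (abs_nonneg _) hb1
  have h2' : t2 ∈ T.erase t1 := Finset.mem_erase.2 ⟨hne.symm, h2⟩
  calc |∏ t ∈ T, x t| = ∏ t ∈ T, |x t| := Finset.abs_prod _ _
    _ = |x t1| * ∏ t ∈ T.erase t1, |x t| := (Finset.mul_prod_erase _ _ h1).symm
    _ = |x t1| * (|x t2| * ∏ t ∈ (T.erase t1).erase t2, |x t|) := by
        rw [← Finset.mul_prod_erase _ _ h2']
    _ ≤ ε * (ε * 1) := by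
        refine mul_le_mul hb1 ?_ (by positivity) h0
        refine mul_le_mul hb2 ?_ (by positivity) h0
        exact Finset.prod_le_one (fun t _ => abs_nonneg _)
          (fun t ht => hall t (Finset.mem_of_mem_erase (Finset.mem_of_mem_erase ht)))
    _ = ε ^ 2 := by ring

lemma classify {z : ℕ} (hz : 0 < z) (π : Equiv.Perm (Fin (2 * z + 2)))
    (h1 : ∀ r, π (π r) = r) (h2 : ∀ r, π r ≠ r)
    (h3 : ∀ r, grp (π r).1 = grp r.1) :
    π = Eperm z hz 0 ∨ π = Eperm z hz 1 ∨ π = Eperm z hz 2 := by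
  have hvne : ∀ r, (π r).1 ≠ r.1 := fun r h => h2 r (Fin.ext h)
  have hhigh : ∀ r : Fin (2 * z + 2), 4 ≤ r.1 → (π r).1 = swp r.1 := by
    intro r hr4
    have h3r := h3 r
    have hlt := (π r).isLt
    have hrlt := r.isLt
    have hne := hvne r
    unfold grp swp at *
    split_ifs at * <;> omega
  have hlow : ∀ r : Fin (2 * z + 2), r.1 < 4 → (π r).1 < 4 := by
    intro r hr4
    have h3r := h3 r
    unfold grp at h3r
    split_ifs at h3r <;> omega
  have hk4 : 3 < 2 * z + 2 := by omega
  set a0 : Fin (2 * z + 2) := ⟨0, by omega⟩ with ha0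
  set a1 : Fin (2 * z + 2) := ⟨1, by omega⟩ with ha1
  set a2 : Fin (2 * z + 2) := ⟨2, by omega⟩ with ha2
  set a3 : Fin (2 * z + 2) := ⟨3, by omega⟩ with ha3
  have v0 : a0.1 = 0 := by rw [ha0]
  have v1 : a1.1 = 1 := by rw [ha1]
  have v2 : a2.1 = 2 := by rw [ha2]
  have v3 : a3.1 = 3 := by rw [ha3]
  have hinj : ∀ u w : Fin (2 * z + 2), π u = π w → u = w := fun u w h => π.injective h
  have hswap : ∀ u w : Fin (2 * z + 2), π u = w → π w = u := by
    intro u w h; rw [← h, h1]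
  -- value of π on a0
  have h0lt : (π a0).1 < 4 := hlow a0 (by omega)
  have h0ne : (π a0).1 ≠ 0 := by
    have := hvne a0
    omega
  -- helper to finish each case
  have finish : ∀ c : ℕ, (π a0).1 = ef c 0 → (π a1).1 = ef c 1 →
      (π a2).1 = ef c 2 → (π a3).1 = ef c 3 → π = Eperm z hz c := by
    intro c e0 e1 e2 e3
    apply Equiv.ext
    intro r
    apply Fin.ext
    rw [Eperm_apply]
    by_cases hr4 : 4 ≤ r.1
    · rw [hhigh r hr4]
      unfold ef
      rw [if_neg (by omega)]
    · have hh : r.1 = 0 ∨ r.1 = 1 ∨ r.1 = 2 ∨ r.1 = 3 := by omega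
      rcases hh with h | h | h | h
      · have hr : r = a0 := Fin.ext (by rw [h, v0])
        rw [hr, e0, v0]
      · have hr : r = a1 := Fin.ext (by rw [h, v1])
        rw [hr, e1, v1]
      · have hr : r = a2 := Fin.ext (by rw [h, v2])
        rw [hr, e2, v2]
      · have hr : r = a3 := Fin.ext (by rw [h, v3])
        rw [hr, e3, v3]
  have hval : (π a0).1 = 1 ∨ (π a0).1 = 2 ∨ (π a0).1 = 3 := by omega
  rcases hval with hc | hc | hc
  · -- π = Eperm 0 : (01)(23)
    left
    have e0 : π a0 = a1 := Fin.ext (by rw [hc, v1])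
    have e1 : π a1 = a0 := hswap _ _ e0
    have e2 : π a2 = a3 := by
      have hlt2 : (π a2).1 < 4 := hlow a2 (by omega)
      have hne2 : (π a2).1 ≠ a2.1 := hvne a2
      have hne1 : (π a2).1 ≠ 1 := by
        intro h
        have h' : π a2 = a1 := Fin.ext (by rw [h, v1])
        have := hinj _ _ (h'.trans e0.symm)
        have := congrArg Fin.val this
        omega
      have hne0 : (π a2).1 ≠ 0 := by
        intro h
        have h' : π a2 = a0 := Fin.ext (by rw [h, v0])
        have := hswap _ _ h'
        rw [e0] at this
        have := congrArg Fin.val this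
        omega
      exact Fin.ext (by omega)
    have e3 : π a3 = a2 := hswap _ _ e2
    exact finish 0 (by rw [e0, v1]; decide) (by rw [e1, v0]; decide)
      (by rw [e2, v3]; decide) (by rw [e3, v2]; decide)
  · -- π = Eperm 1 : (02)(13)
    right; left
    have e0 : π a0 = a2 := Fin.ext (by rw [hc, v2])
    have e2 : π a2 = a0 := hswap _ _ e0
    have e1 : π a1 = a3 := by
      have hlt2 : (π a1).1 < 4 := hlow a1 (by omega)
      have hne1 : (π a1).1 ≠ a1.1 := hvne a1
      have hne2 : (π a1).1 ≠ 2 := by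
        intro h
        have h' : π a1 = a2 := Fin.ext (by rw [h, v2])
        have := hinj _ _ (h'.trans e0.symm)
        have := congrArg Fin.val this
        omega
      have hne0 : (π a1).1 ≠ 0 := by
        intro h
        have h' : π a1 = a0 := Fin.ext (by rw [h, v0])
        have := hswap _ _ h'
        rw [e0] at this
        have := congrArg Fin.val this
        omega
      exact Fin.ext (by omega)
    have e3 : π a3 = a1 := hswap _ _ e1
    exact finish 1 (by rw [e0, v2]; decide) (by rw [e1, v3]; decide)
      (by rw [e2, v0]; decide) (by rw [e3, v1]; decide)
  · -- π = Eperm 2 : (03)(12)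
    right; right
    have e0 : π a0 = a3 := Fin.ext (by rw [hc, v3])
    have e3 : π a3 = a0 := hswap _ _ e0
    have e1 : π a1 = a2 := by
      have hlt2 : (π a1).1 < 4 := hlow a1 (by omega)
      have hne1 : (π a1).1 ≠ a1.1 := hvne a1
      have hne3 : (π a1).1 ≠ 3 := by
        intro h
        have h' : π a1 = a3 := Fin.ext (by rw [h, v3])
        have := hinj _ _ (h'.trans e0.symm)
        have := congrArg Fin.val this
        omega
      have hne0 : (π a1).1 ≠ 0 := by
        intro h
        have h' : π a1 = a0 := Fin.ext (by rw [h, v0])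
        have := hswap _ _ h'
        rw [e0] at this
        have := congrArg Fin.val this
        omega
      exact Fin.ext (by omega)
    have e2 : π a2 = a1 := hswap _ _ e1
    exact finish 2 (by rw [e0, v3]; decide) (by rw [e1, v2]; decide)
      (by rw [e2, v1]; decide) (by rw [e3, v0]; decide)

lemma key_sum (z m : ℕ) (hz : 0 < z) (S : Matrix (Fin m) (Fin m) ℝ)
    (hdiag : ∀ i, S i i = 1) {ε : ℝ} (hε1 : ε ≤ 1)
    (hoff : ∀ i j : Fin m, i ≠ j → |S i j| ≤ ε)
    (F : Fin (2 * z + 2) → Fin m)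
    (hF : ∀ r s : Fin (2 * z + 2), F r = F s ↔ grp r.1 = grp s.1) :
    |(∑ π ∈ PairPartitions (2 * z + 2), pairProd S F π) - 3| ≤
      ((PairPartitions (2 * z + 2)).card : ℝ) * ε ^ 2 := by
  classical
  set P0 : Equiv.Perm (Fin (2 * z + 2)) → Prop :=
    fun π => ∀ r, grp (π r).1 = grp r.1 with hP0
  have hmem : ∀ π ∈ PairPartitions (2 * z + 2),
      (∀ r, π (π r) = r) ∧ (∀ r, π r ≠ r) := by
    intro π hπ
    simp only [PairPartitions, Finset.mem_filter, Finset.mem_univ, true_and] at hπ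
    exact ⟨fun r => (hπ r).1, fun r => (hπ r).2⟩
  have hEmem : ∀ c, Eperm z hz c ∈ (PairPartitions (2 * z + 2)).filter P0 := by
    intro c
    rw [Finset.mem_filter]
    constructor
    · simp only [PairPartitions, Finset.mem_filter, Finset.mem_univ, true_and]
      intro r
      constructor
      · exact Fin.ext (ef_invol c r.1)
      · intro h
        exact ef_ne c r.1 (congrArg Fin.val h)
    · intro r
      exact grp_ef c r.1
  have hEne : ∀ c c' : ℕ, c < 3 → c' < 3 → c ≠ c' → Eperm z hz c ≠ Eperm z hz c' := by
    intro c c' hc hc' hne h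
    have h0 := congrArg (fun π : Equiv.Perm (Fin (2 * z + 2)) => (π ⟨0, by omega⟩).1) h
    simp only [Eperm_apply] at h0
    unfold ef swp at h0
    split_ifs at h0 <;> omega
  have hD : (PairPartitions (2 * z + 2)).filter P0 =
      {Eperm z hz 0, Eperm z hz 1, Eperm z hz 2} := by
    apply Finset.ext
    intro π
    simp only [Finset.mem_insert, Finset.mem_singleton]
    constructor
    · intro hπ
      rw [Finset.mem_filter] at hπ
      obtain ⟨hPP, hp⟩ := hπ
      obtain ⟨hi1, hi2⟩ := hmem π hPP
      exact classify hz π hi1 hi2 hp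
    · intro hπ
      rcases hπ with h | h | h <;> rw [h] <;> exact hEmem _
  have hcard3 : ((PairPartitions (2 * z + 2)).filter P0).card = 3 := by
    rw [hD]
    rw [Finset.card_insert_of_notMem
        (by simp only [Finset.mem_insert, Finset.mem_singleton]
            push_neg
            exact ⟨hEne 0 1 (by omega) (by omega) (by omega),
                   hEne 0 2 (by omega) (by omega) (by omega)⟩),
      Finset.card_insert_of_notMem
        (by simp only [Finset.mem_singleton]
            exact hEne 1 2 (by omega) (by omega) (by omega)),
      Finset.card_singleton]
  have hDsum : ∑ π ∈ (PairPartitions (2 * z + 2)).filter P0, pairProd S F π = 3 := by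
    have hone : ∀ π ∈ (PairPartitions (2 * z + 2)).filter P0, pairProd S F π = 1 := by
      intro π hπ
      rw [Finset.mem_filter] at hπ
      unfold pairProd
      apply Finset.prod_eq_one
      intro r hr
      have hFr : F r = F (π r) := (hF r (π r)).2 (hπ.2 r).symm
      rw [← hFr, hdiag]
    rw [Finset.sum_congr rfl hone, Finset.sum_const, hcard3]
    norm_num
  -- bound for non-diagonal partitions
  have hcross : ∀ π ∈ (PairPartitions (2 * z + 2)).filter (fun π => ¬ P0 π),
      |pairProd S F π| ≤ ε ^ 2 := by
    intro π hπ
    rw [Finset.mem_filter] at hπ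
    obtain ⟨hPP, hnp⟩ := hπ
    obtain ⟨h1, h2⟩ := hmem π hPP
    have hnp' : ∃ r, grp (π r).1 ≠ grp r.1 := by
      by_contra hcon
      push_neg at hcon
      exact hnp hcon
    obtain ⟨r, hr⟩ := hnp'
    have hmain : ∃ a : Fin (2 * z + 2), 4 ≤ a.1 ∧ grp (π a).1 ≠ grp a.1 := by
      by_cases h4 : 4 ≤ r.1
      · exact ⟨r, h4, hr⟩
      · refine ⟨π r, ?_, ?_⟩
        · by_contra hcon
          push_neg at hcon
          have hg1 : grp (π r).1 = 0 := by unfold grp; rw [if_pos (by omega)]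
          have hg2 : grp r.1 = 0 := by unfold grp; rw [if_pos (by omega)]
          exact hr (by rw [hg1, hg2])
        · rw [h1 r]
          exact fun h => hr h.symm
    obtain ⟨a, ha4, hax⟩ := hmain
    set s : Fin (2 * z + 2) :=
      ⟨swp a.1, by have := a.isLt; unfold swp; split_ifs <;> omega⟩ with hs
    have hs4 : 4 ≤ s.1 := by show 4 ≤ swp a.1; unfold swp; split_ifs <;> omega
    have hsgrp : grp s.1 = grp a.1 := grp_swp a.1
    have hsa : s.1 ≠ a.1 := by show swp a.1 ≠ a.1; unfold swp; split_ifs <;> omega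
    have hsx : grp (π s).1 ≠ grp s.1 := by
      intro hcon
      have hcases := grp_eq_cases (π s).isLt s.isLt hs4 hcon
      rcases hcases with h | h
      · exact h2 s (Fin.ext h)
      · have hss : swp s.1 = a.1 := swp_swp a.1
        rw [hss] at h
        have hπsa : π s = a := Fin.ext h
        have heq : s = π a := by rw [← hπsa, h1]
        rw [heq] at hsgrp
        exact hax hsgrp
    have hd1 : s ≠ a := fun h => hsa (congrArg Fin.val h)
    have hd2 : s ≠ π a := by
      intro h
      rw [h] at hsgrp
      exact hax hsgrp
    have hd3 : π s ≠ a := by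
      intro h
      have := congrArg π h
      rw [h1] at this
      exact hd2 this
    have hd4 : π s ≠ π a := fun h => hd1 (π.injective h)
    have hblock : ∀ b : Fin (2 * z + 2), grp (π b).1 ≠ grp b.1 →
        ∃ t, t ∈ Finset.univ.filter (fun r : Fin (2 * z + 2) => r < π r) ∧
          (t = b ∨ t = π b) ∧ grp (π t).1 ≠ grp t.1 := by
      intro b hb
      rcases (h2 b).lt_or_gt with h | h
      · refine ⟨π b, Finset.mem_filter.2 ⟨Finset.mem_univ _, by rw [h1]; exact h⟩,
          Or.inr rfl, ?_⟩
        rw [h1]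
        exact fun hh => hb hh.symm
      · exact ⟨b, Finset.mem_filter.2 ⟨Finset.mem_univ _, h⟩, Or.inl rfl, hb⟩
    obtain ⟨t1, ht1mem, ht1id, ht1x⟩ := hblock a hax
    obtain ⟨t2, ht2mem, ht2id, ht2x⟩ := hblock s hsx
    have htne : t1 ≠ t2 := by
      rcases ht1id with h | h <;> rcases ht2id with h' | h' <;> rw [h, h']
      · exact hd1.symm
      · exact hd3.symm
      · exact hd2.symm
      · exact hd4.symm
    unfold pairProd
    apply prod_abs_le_sq _ _ t1 t2 ht1mem ht2mem htne
    · intro t ht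
      by_cases hFt : F t = F (π t)
      · rw [hFt, hdiag, abs_one]
      · exact le_trans (hoff _ _ hFt) hε1
    · exact hoff _ _ (fun h => ht1x (((hF _ _).1 h).symm))
    · exact hoff _ _ (fun h => ht2x (((hF _ _).1 h).symm))
  have hsplit := Finset.sum_filter_add_sum_filter_not (PairPartitions (2 * z + 2)) P0
    (pairProd S F)
  have hrw : (∑ π ∈ PairPartitions (2 * z + 2), pairProd S F π) - 3 =
      ∑ π ∈ (PairPartitions (2 * z + 2)).filter (fun π => ¬ P0 π), pairProd S F π := by
    rw [← hsplit, hDsum]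
    ring
  rw [hrw]
  calc |∑ π ∈ (PairPartitions (2 * z + 2)).filter (fun π => ¬ P0 π), pairProd S F π|
      ≤ ∑ π ∈ (PairPartitions (2 * z + 2)).filter (fun π => ¬ P0 π), |pairProd S F π| :=
        Finset.abs_sum_le_sum_abs _ _
    _ ≤ ((PairPartitions (2 * z + 2)).filter (fun π => ¬ P0 π)).card • (ε ^ 2) :=
        Finset.sum_le_card_nsmul _ _ _ hcross
    _ = (((PairPartitions (2 * z + 2)).filter (fun π => ¬ P0 π)).card : ℝ) * ε ^ 2 :=
        nsmul_eq_mul _ _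
    _ ≤ ((PairPartitions (2 * z + 2)).card : ℝ) * ε ^ 2 := by
        apply mul_le_mul_of_nonneg_right _ (sq_nonneg ε)
        exact_mod_cast Finset.card_filter_le _ _

/-- Wick-sum bound for tuples with one index of multiplicity four and
`z − 1` distinct doubled indices: the sum is close to `3`. -/
theorem stmt11 (α : ℝ) (hα : 0 < α) (S : ∀ n, Matrix (Fin n) (Fin n) ℝ)
    (hS : CovMatSeq α S)
    (n z : ℕ) (hz : 0 < z) (hzΔ : z ≤ Δn n)
    (i0 : Fin z → Fin (Δn n)) (hinj : Function.Injective i0) :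
    |(∑ π ∈ PairPartitions (2 * z + 2),
        pairProd (S (Δn n))
          (fun r : Fin (2 * z + 2) =>
            if (r : ℕ) < 4 then i0 ⟨0, hz⟩
            else i0 ⟨((r : ℕ) - 2) / 2, by have hr := r.isLt; omega⟩) π) - 3| ≤
      ((PairPartitions (2 * z + 2)).card : ℝ) / ((n : ℝ) / Real.sqrt 2) ^ (4 * α) := by
  classical
  obtain ⟨hsymm, hpd, hdiag, hoff⟩ := hS (Δn n)
  have hn1 : 1 ≤ n := by
    rcases Nat.eq_zero_or_pos n with h0 | h0
    · subst h0
      simp [Δn] at hzΔ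
      omega
    · exact h0
  have hm1 : 1 ≤ Δn n := le_trans hz hzΔ
  have hmR : (1:ℝ) ≤ (Δn n : ℝ) := by exact_mod_cast hm1
  have hma : (1:ℝ) ≤ (Δn n : ℝ) ^ α := by
    calc (1:ℝ) = (1:ℝ) ^ α := (Real.one_rpow α).symm
      _ ≤ (Δn n : ℝ) ^ α := Real.rpow_le_rpow (by norm_num) hmR hα.le
  have hε1 : 1 / (Δn n : ℝ) ^ α ≤ 1 :=
    (div_le_one (lt_of_lt_of_le one_pos hma)).2 hma
  refine le_trans (key_sum z (Δn n) hz (S (Δn n)) hdiag hε1 hoff _ ?_) ?_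
  · -- the index function respects groups
    intro r s
    constructor
    · intro h
      unfold grp
      split_ifs at h ⊢ with hr hs hs
      · rfl
      · have := hinj h
        rw [Fin.mk.injEq] at this
        have hslt := s.isLt
        omega
      · have := hinj h
        rw [Fin.mk.injEq] at this
        have hrlt := r.isLt
        omega
      · have := hinj h
        rw [Fin.mk.injEq] at this
        exact this
    · intro h
      unfold grp at h
      split_ifs at h ⊢ with hr hs hs
      · rfl
      · omega
      · omega
      · exact congrArg i0 (Fin.ext h)
  · -- numerical bound
    set c : ℝ := ((PairPartitions (2 * z + 2)).card : ℝ) with hc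
    have hc0 : 0 ≤ c := Nat.cast_nonneg _
    set b : ℝ := (n : ℝ) / Real.sqrt 2 with hb
    have hnR : (0:ℝ) < (n : ℝ) := by exact_mod_cast hn1
    have hb0 : 0 < b := div_pos hnR (Real.sqrt_pos.2 two_pos)
    have h2d : 2 * Δn n = n * (n + 1) := by
      unfold Δn
      exact Nat.mul_div_cancel' (Nat.even_mul_succ_self n).two_dvd
    have hsqle : (n:ℝ) ^ 2 ≤ 2 * (Δn n : ℝ) := by
      have hnat : n * n ≤ 2 * Δn n := by
        rw [h2d]
        exact Nat.mul_le_mul_left n (by omega)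
      calc (n:ℝ) ^ 2 = ((n * n : ℕ) : ℝ) := by push_cast; ring
        _ ≤ ((2 * Δn n : ℕ) : ℝ) := by exact_mod_cast hnat
        _ = 2 * (Δn n : ℝ) := by push_cast; ring
    have hbsq : b ^ (2:ℕ) ≤ (Δn n : ℝ) := by
      have h2 : b ^ (2:ℕ) = (n:ℝ) ^ 2 / 2 := by
        rw [hb, div_pow, Real.sq_sqrt (by norm_num : (0:ℝ) ≤ 2)]
      rw [h2]
      linarith
    have hmono : b ^ (4 * α) ≤ (Δn n : ℝ) ^ (2 * α) := by
      have hb4 : b ^ (4 * α) = (b ^ (2:ℕ)) ^ (2 * α) := by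
        rw [← Real.rpow_natCast b 2, ← Real.rpow_mul hb0.le]
        norm_num
        ring_nf
      rw [hb4]
      exact Real.rpow_le_rpow (by positivity) hbsq (by positivity)
    have hεsq : (1 / (Δn n : ℝ) ^ α) ^ 2 = ((Δn n : ℝ) ^ (2 * α))⁻¹ := by
      rw [div_pow, one_pow, ← Real.rpow_natCast ((Δn n : ℝ) ^ α) 2,
        ← Real.rpow_mul (by positivity : (0:ℝ) ≤ (Δn n:ℝ))]
      rw [one_div]
      norm_num
      ring_nf
    calc c * (1 / (Δn n : ℝ) ^ α) ^ 2 = c * ((Δn n : ℝ) ^ (2 * α))⁻¹ := by rw [hεsq]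
      _ ≤ c * (b ^ (4 * α))⁻¹ := by
          apply mul_le_mul_of_nonneg_left _ hc0
          exact inv_anti₀ (Real.rpow_pos_of_pos hb0 _) hmono
      _ = c / b ^ (4 * α) := by rw [div_eq_mul_inv]

end RMT
end
end

section
/- Let b = (b_n)_n be a sequence of n-bandwidths, let k, n ∈ ℕ and l ∈ {1,…,k}. Then the number of b_n-relevant tuples t ∈ [n]^k_b whose multigraph has at most l distinct vertices satisfies #{t ∈ [n]^k_b : #V_t ≤ l} ≤ k^k · n · b_n^{l−1}. -/
open MeasureTheory ProbabilityTheory Filter Finset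
open scoped BigOperators ENNReal NNReal Classical

noncomputable section

namespace RMT

variable {Ω : Type} [MeasurableSpace Ω]

/-! ### Auxiliary material for stmt15 -/

def fval (n x y : ℕ) : ℕ := (((y : ℤ) - (x : ℤ)) % (n : ℤ)).toNat

def Tset (n bn : ℕ) : Finset ℕ :=
  if bn = n then Finset.range n
  else Finset.range ((bn - 1) / 2 + 1) ∪ Finset.Icc (n - (bn - 1) / 2) (n - 1)

lemma fval_lt {n : ℕ} (hn : 0 < n) (x y : ℕ) : fval n x y < n := by
  have h1 : (0:ℤ) ≤ ((y : ℤ) - x) % n := Int.emod_nonneg _ (by exact_mod_cast hn.ne')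
  have h2 : ((y : ℤ) - x) % n < n := Int.emod_lt_of_pos _ (by exact_mod_cast hn)
  unfold fval; omega

lemma fval_injOn {n : ℕ} (hn : 0 < n) (x : ℕ) {y y' : ℕ}
    (hy : y ∈ Finset.Icc 1 n) (hy' : y' ∈ Finset.Icc 1 n)
    (h : fval n x y = fval n x y') : y = y' := by
  simp only [Finset.mem_Icc] at hy hy'
  have h1 : (0:ℤ) ≤ ((y : ℤ) - x) % n := Int.emod_nonneg _ (by exact_mod_cast hn.ne')
  have h1' : (0:ℤ) ≤ ((y' : ℤ) - x) % n := Int.emod_nonneg _ (by exact_mod_cast hn.ne')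
  have h2 : ((y : ℤ) - x) % n = ((y' : ℤ) - x) % n := by unfold fval at h; omega
  have h3 : (n:ℤ) ∣ ((y':ℤ) - x) - ((y:ℤ) - x) := Int.ModEq.dvd h2
  have h4 : ((y':ℤ) - x) - ((y:ℤ) - x) = (y':ℤ) - y := by ring
  rw [h4] at h3
  have h5 : (y':ℤ) - y = 0 := Int.eq_zero_of_abs_lt_dvd h3 (by rw [abs_lt]; constructor <;> omega)
  omega

lemma fval_spec {n x y : ℕ} (hx : 1 ≤ x) (hxn : x ≤ n) (hy : 1 ≤ y) (hyn : y ≤ n) :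
    (x ≤ y ∧ fval n x y = y - x) ∨ (y < x ∧ fval n x y = n - (x - y)) := by
  rcases le_or_gt x y with h | h
  · left
    refine ⟨h, ?_⟩
    unfold fval
    rw [Int.emod_eq_of_lt (by omega) (by omega)]
    omega
  · right
    refine ⟨h, ?_⟩
    unfold fval
    have e : ((y:ℤ) - x) % n = ((y:ℤ) - x + n * 1) % n := (Int.add_mul_emod_self_left ((y:ℤ) - x) n 1).symm
    rw [e, mul_one, Int.emod_eq_of_lt (by omega) (by omega)]
    omega

lemma fval_mem_Tset {n bn : ℕ} (hb : IsBandwidth n bn) (hn : 0 < n) {x y : ℕ}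
    (hx : x ∈ Finset.Icc 1 n) (hy : y ∈ Finset.Icc 1 n) (hrel : BRelevant n bn x y) :
    fval n x y ∈ Tset n bn := by
  simp only [Finset.mem_Icc] at hx hy
  unfold Tset
  by_cases hcase : bn = n
  · simp [hcase, fval_lt hn]
  · rw [if_neg hcase]
    have hd := hrel.resolve_left hcase
    rw [Finset.mem_union, Finset.mem_range, Finset.mem_Icc]
    rcases fval_spec hx.1 hx.2 hy.1 hy.2 with ⟨hxy, hf⟩ | ⟨hxy, hf⟩ <;>
      rcases abs_cases ((x:ℤ) - (y:ℤ)) with ⟨he, _⟩ | ⟨he, _⟩ <;>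
      rw [he] at hd <;> omega

lemma card_Tset {n bn : ℕ} (hb : IsBandwidth n bn) (hn : 0 < n) : (Tset n bn).card ≤ bn := by
  unfold Tset
  by_cases hcase : bn = n
  · simp [hcase]
  · rw [if_neg hcase]
    obtain ⟨hlt, m, hm⟩ := hb.resolve_right hcase
    refine le_trans (Finset.card_union_le _ _) ?_
    rw [Finset.card_range, Nat.card_Icc]
    omega

def pat {k : ℕ} (t : Fin k → ℕ) (i : Fin k) : Fin k :=
  (Finset.univ.filter fun j => t j = t i).min' ⟨i, by simp⟩

lemma pat_le {k : ℕ} (t : Fin k → ℕ) (i : Fin k) : pat t i ≤ i :=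
  Finset.min'_le _ _ (by simp)

lemma t_pat {k : ℕ} (t : Fin k → ℕ) (i : Fin k) : t (pat t i) = t i := by
  have h := Finset.min'_mem (Finset.univ.filter fun j => t j = t i) ⟨i, by simp⟩
  exact (Finset.mem_filter.mp h).2

lemma pat_congr {k : ℕ} {t : Fin k → ℕ} {i j : Fin k} (h : t i = t j) : pat t i = pat t j := by
  unfold pat
  simp only [h]

lemma pat_idem {k : ℕ} (t : Fin k → ℕ) (i : Fin k) : pat t (pat t i) = pat t i :=
  pat_congr (t_pat t i)

lemma pat_eq_of_val_zero {k : ℕ} (t : Fin k → ℕ) (i : Fin k) (h : i.1 = 0) : pat t i = i := by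
  have h1 : (pat t i).1 ≤ i.1 := Fin.le_def.mp (pat_le t i)
  exact Fin.ext (by omega)

lemma card_verts_eq {k : ℕ} (t : Fin k → ℕ) :
    (verts t).card = (Finset.univ.filter fun i => pat t i = i).card := by
  classical
  have himg : Finset.image t (Finset.univ.filter fun i => pat t i = i) = verts t := by
    apply Finset.Subset.antisymm
    · exact Finset.image_subset_image (Finset.filter_subset _ _)
    · intro v hv
      simp only [verts, Finset.mem_image, Finset.mem_univ, true_and] at hv
      obtain ⟨i, rfl⟩ := hv
      exact Finset.mem_image.mpr ⟨pat t i, by simp [pat_idem], t_pat t i⟩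
  rw [← himg]
  rw [Finset.card_image_of_injOn]
  intro i hi j hj hij
  simp only [Finset.mem_coe, Finset.mem_filter] at hi hj
  rw [← hi.2, ← hj.2]
  exact pat_congr hij

def gmap (n : ℕ) {k : ℕ} (t : Fin k → ℕ) (i : Fin k) : ℕ :=
  if pat t i = i then
    if i.1 = 0 then t i
    else fval n (t ⟨i.1 - 1, Nat.lt_of_le_of_lt (Nat.sub_le _ _) i.isLt⟩) (t i)
  else 0

lemma gmap_inj {n k : ℕ} (hn : 0 < n) {t t' : Fin k → ℕ}
    (ht : ∀ i, t i ∈ Finset.Icc 1 n) (ht' : ∀ i, t' i ∈ Finset.Icc 1 n)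
    (hpat : ∀ i, pat t i = pat t' i) (hg : ∀ i, gmap n t i = gmap n t' i) : t = t' := by
  suffices h : ∀ m, ∀ i : Fin k, i.1 ≤ m → t i = t' i by
    funext i; exact h i.1 i le_rfl
  intro m
  induction m with
  | zero =>
    intro i hi
    have h0 : i.1 = 0 := Nat.le_zero.mp hi
    have hp : pat t i = i := pat_eq_of_val_zero t i h0
    have hp' : pat t' i = i := (hpat i) ▸ hp
    simpa [gmap, hp, hp', h0] using hg i
  | succ m ih =>
    intro i hi
    rcases Nat.lt_or_ge i.1 (m+1) with hc | hc
    · exact ih i (by omega)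
    by_cases hp : pat t i = i
    · have hp' : pat t' i = i := (hpat i) ▸ hp
      by_cases h0 : i.1 = 0
      · simpa [gmap, hp, hp', h0] using hg i
      · set j : Fin k := ⟨i.1 - 1, Nat.lt_of_le_of_lt (Nat.sub_le _ _) i.isLt⟩ with hj
        have htj : t j = t' j := ih j (by simp only [hj]; omega)
        have hgi : fval n (t j) (t i) = fval n (t' j) (t' i) := by
          simpa [gmap, hp, hp', h0] using hg i
        rw [htj] at hgi
        exact fval_injOn hn _ (ht i) (ht' i) hgi
    · have hlt : pat t i < i := lt_of_le_of_ne (pat_le t i) hp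
      have hple : (pat t i).1 ≤ m := by
        have := Fin.lt_def.mp hlt; omega
      calc t i = t (pat t i) := (t_pat t i).symm
        _ = t' (pat t i) := ih _ hple
        _ = t' (pat t' i) := by rw [hpat i]
        _ = t' i := t_pat t' i

lemma gmap_mem {n bn k : ℕ} (hb : IsBandwidth n bn) (hn : 0 < n) {t : Fin k → ℕ}
    (ht : t ∈ relTuples n bn k) (i : Fin k) :
    gmap n t i ∈ (if pat t i = i then (if i.1 = 0 then Finset.Icc 1 n else Tset n bn)
      else ({0} : Finset ℕ)) := by
  have hmem := (Finset.mem_filter.mp ht).1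
  rw [Fintype.mem_piFinset] at hmem
  have hrel := (Finset.mem_filter.mp ht).2
  by_cases hp : pat t i = i
  · rw [if_pos hp]
    by_cases h0 : i.1 = 0
    · rw [if_pos h0]; simpa [gmap, hp, h0] using hmem i
    · rw [if_neg h0]
      set j : Fin k := ⟨i.1 - 1, Nat.lt_of_le_of_lt (Nat.sub_le _ _) i.isLt⟩ with hj
      have hcyc : cyc j = i := by
        ext
        show (i.1 - 1 + 1) % k = i.1
        have h1 : i.1 - 1 + 1 = i.1 := by omega
        rw [h1, Nat.mod_eq_of_lt i.isLt]
      have hb' := hrel j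
      rw [hcyc] at hb'
      have := fval_mem_Tset hb hn (hmem j) (hmem i) hb'
      simpa [gmap, hp, h0] using this
  · simp [gmap, hp]

/-- Counting `b_n`-relevant tuples with at most `l` distinct
vertices. -/
theorem stmt15 (b : ℕ → ℕ) (hband : ∀ m, 1 ≤ m → IsBandwidth m (b m))
    (k n : ℕ) (hk : 0 < k) (hn : 0 < n) (l : ℕ) (hl : l ∈ Finset.Icc 1 k) :
    ((relTuples n (b n) k).filter fun t => (verts t).card ≤ l).card ≤
      k ^ k * (n * b n ^ (l - 1)) := by
  classical
  obtain ⟨hl1, hlk⟩ := Finset.mem_Icc.mp hl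
  have hb : IsBandwidth n (b n) := hband n hn
  have hbn1 : 1 ≤ b n := by
    rcases hb with ⟨_, m, hm⟩ | he
    · omega
    · omega
  set A := (relTuples n (b n) k).filter (fun t => (verts t).card ≤ l) with hA
  have hcount : ∀ σ : Fin k → Fin k,
      (A.filter fun t => pat t = σ).card ≤ n * b n ^ (l - 1) := by
    intro σ
    rcases (A.filter fun t => pat t = σ).eq_empty_or_nonempty with he | ⟨t0, ht0⟩
    · simp [he]
    set G := Fintype.piFinset (fun i : Fin k =>
      if σ i = i then (if i.1 = 0 then Finset.Icc 1 n else Tset n (b n))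
      else ({0} : Finset ℕ)) with hG
    -- facts about t0
    rw [Finset.mem_filter] at ht0
    have ht0A := ht0.1
    have ht0σ : pat t0 = σ := ht0.2
    rw [hA, Finset.mem_filter] at ht0A
    have ht0rel := ht0A.1
    have ht0l : (verts t0).card ≤ l := ht0A.2
    set S := Finset.univ.filter (fun i : Fin k => σ i = i) with hS
    have hSl : S.card ≤ l := by
      rw [hS, ← ht0σ, ← card_verts_eq]; exact ht0l
    have h0S : (⟨0, hk⟩ : Fin k) ∈ S := by
      rw [hS, Finset.mem_filter, ← ht0σ]
      exact ⟨Finset.mem_univ _, pat_eq_of_val_zero t0 _ rfl⟩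
    -- injection
    have hsub : ∀ t ∈ (A.filter fun t => pat t = σ), t ∈ relTuples n (b n) k := by
      intro t ht
      rw [Finset.mem_filter, hA, Finset.mem_filter] at ht
      exact ht.1.1
    have hent : ∀ t ∈ (A.filter fun t => pat t = σ), ∀ i, t i ∈ Finset.Icc 1 n := by
      intro t ht i
      have := (Finset.mem_filter.mp (hsub t ht)).1
      rw [Fintype.mem_piFinset] at this
      exact this i
    have h1 : (A.filter fun t => pat t = σ).card ≤ G.card := by
      apply Finset.card_le_card_of_injOn (gmap n)
      · intro t ht
        rw [hG, Finset.mem_coe, Fintype.mem_piFinset]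
        intro i
        have hpσ : pat t = σ := (Finset.mem_filter.mp ht).2
        rw [← hpσ]
        exact gmap_mem hb hn (hsub t ht) i
      · intro t ht t' ht' hgg
        have hpσ : pat t = σ := (Finset.mem_filter.mp ht).2
        have hpσ' : pat t' = σ := (Finset.mem_filter.mp ht').2
        exact gmap_inj hn (hent t ht) (hent t' ht') (fun i => by rw [hpσ, hpσ'])
          (fun i => congrFun hgg i)
    -- counting G
    have h2 : G.card ≤ n * b n ^ (l - 1) := by
      rw [hG, Fintype.card_piFinset]
      have hcomp : ∀ i : Fin k,
          ((if σ i = i then (if i.1 = 0 then Finset.Icc 1 n else Tset n (b n))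
            else ({0} : Finset ℕ)).card)
          = if σ i = i then (if i.1 = 0 then n else (Tset n (b n)).card) else 1 := by
        intro i
        by_cases hp : σ i = i <;> by_cases h0 : i.1 = 0 <;> simp [hp, h0]
      rw [Finset.prod_congr rfl (fun i _ => hcomp i)]
      rw [← Finset.prod_filter (fun i : Fin k => σ i = i)
        (fun i : Fin k => if i.1 = 0 then n else (Tset n (b n)).card)]
      rw [← hS]
      rw [← Finset.insert_erase h0S, Finset.prod_insert (Finset.notMem_erase _ _)]
      have hval0 : ((⟨0, hk⟩ : Fin k)).1 = 0 := rfl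
      rw [if_pos hval0]
      have hrest : ∀ i ∈ S.erase ⟨0, hk⟩,
          (if i.1 = 0 then n else (Tset n (b n)).card) = (Tset n (b n)).card := by
        intro i hi
        have hne : i ≠ ⟨0, hk⟩ := Finset.ne_of_mem_erase hi
        have : i.1 ≠ 0 := fun h => hne (Fin.ext h)
        rw [if_neg this]
      rw [Finset.prod_congr rfl hrest, Finset.prod_const]
      have hcard : (S.erase ⟨0, hk⟩).card ≤ l - 1 := by
        rw [Finset.card_erase_of_mem h0S]; omega
      calc n * (Tset n (b n)).card ^ (S.erase ⟨0, hk⟩).card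
          ≤ n * b n ^ (S.erase ⟨0, hk⟩).card := by
            exact Nat.mul_le_mul_left n (Nat.pow_le_pow_left (card_Tset hb hn) _)
        _ ≤ n * b n ^ (l - 1) := Nat.mul_le_mul_left n (Nat.pow_le_pow_right hbn1 hcard)
    omega
  calc A.card = ∑ σ : Fin k → Fin k, (A.filter fun t => pat t = σ).card :=
        Finset.card_eq_sum_card_fiberwise (fun t _ => Finset.mem_univ (pat t))
    _ ≤ (Finset.univ : Finset (Fin k → Fin k)).card * (n * b n ^ (l - 1)) :=
        Finset.sum_le_card_nsmul _ _ _ (fun σ _ => hcount σ)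
    _ = k ^ k * (n * b n ^ (l - 1)) := by
        rw [Finset.card_univ, Fintype.card_fun]
        simp

end RMT
end
end

section
/- Let b = (b_n)_n be a sequence of n-bandwidths, fix n, k ∈ ℕ and let s, s' ∈ [n]^k_b. Then: (a) if both s and s' contain only even edges, #𝒯^c(s,s') ≤ k² · (2k)^{2k} · n · b_n^{k−1}; (b) if s or s' contains at least one odd edge, #𝒯^c(s,s') ≤ k² · (2k)^{2k} · n · b_n^{κ_1(s)+⋯+κ_k(s)+κ_1(s')+⋯+κ_k(s')−2}; (c) if s or s' contains at least one odd edge, then for every l ∈ {1,…,k}, #𝒯^c_l(s,s') ≤ k² · (2k)^{2k} · n · b_n^{κ_1(s)+⋯+κ_k(s)+κ_1(s')+⋯+κ_k(s')−l−1}. -/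
open MeasureTheory ProbabilityTheory Filter Finset
open scoped BigOperators ENNReal NNReal Classical

noncomputable section

namespace RMT

variable {Ω : Type} [MeasurableSpace Ω]

namespace Aux
open Finset

variable {k : ℕ}

/-- cyclic extension of a tuple -/
def Tx (t : Fin k → ℕ) (i : ℕ) : ℕ :=
  if h : i % k < k then t ⟨i % k, h⟩ else 0

lemma Tx_apply (hk : 0 < k) (t : Fin k → ℕ) (i : ℕ) :
    Tx t i = t ⟨i % k, Nat.mod_lt _ hk⟩ := by
  unfold Tx; rw [dif_pos]

lemma Tx_fin (t : Fin k → ℕ) (i : Fin k) : Tx t i.1 = t i := by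
  have hk : 0 < k := i.pos
  rw [Tx_apply hk]; congr 1; exact Fin.ext (Nat.mod_eq_of_lt i.2)

lemma Tx_mod (t : Fin k → ℕ) (i : ℕ) : Tx t (i % k) = Tx t i := by
  unfold Tx; simp [Nat.mod_mod_of_dvd]

lemma Tx_congr (t : Fin k → ℕ) {i j : ℕ} (h : i % k = j % k) : Tx t i = Tx t j := by
  rw [← Tx_mod t i, ← Tx_mod t j, h]

lemma tupleEdges_map (hk : 0 < k) (t : Fin k → ℕ) :
    tupleEdges t = Multiset.map (fun i : Fin k => s(Tx t i.1, Tx t (i.1+1))) univ.val := by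
  unfold tupleEdges
  apply Multiset.map_congr rfl
  intro i _
  rw [Tx_fin t i]
  congr 1
  rw [Tx_apply hk]
  rfl

lemma card_tupleEdges (t : Fin k → ℕ) : Multiset.card (tupleEdges t) = k := by
  unfold tupleEdges; simp

lemma mem_tupleEdges (hk : 0 < k) (t : Fin k → ℕ) (e : Sym2 ℕ) :
    e ∈ (tupleEdges t).toFinset ↔ ∃ i, i < k ∧ s(Tx t i, Tx t (i+1)) = e := by
  rw [Multiset.mem_toFinset, tupleEdges_map hk, Multiset.mem_map]
  constructor
  · rintro ⟨i, -, h⟩; exact ⟨i.1, i.2, h⟩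
  · rintro ⟨i, hi, h⟩
    exact ⟨⟨i, hi⟩, Finset.mem_val.mpr (mem_univ _), h⟩

lemma count_tupleEdges (hk : 0 < k) (t : Fin k → ℕ) (e : Sym2 ℕ) :
    (tupleEdges t).count e
      = ((univ : Finset (Fin k)).filter (fun i => s(Tx t i.1, Tx t (i.1+1)) = e)).card := by
  rw [tupleEdges_map hk, Multiset.count_map]
  have : (filter (fun i : Fin k => s(Tx t i.1, Tx t (i.1+1)) = e) univ).card
      = Multiset.card (Multiset.filter (fun i : Fin k => s(Tx t i.1, Tx t (i.1+1)) = e) univ.val) := rfl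
  rw [this]
  congr 1
  exact Multiset.filter_congr (fun x _ => by constructor <;> (intro h; exact h.symm))

end Aux
namespace Aux
open Finset

lemma bandwidth_pos {n bn : ℕ} (hn : 0 < n) (hb : RMT.IsBandwidth n bn) : 1 ≤ bn := by
  rcases hb with ⟨h1, m, hm⟩ | h2 <;> omega

/-- the set of `bn`-relevant partners of `x` in `{1,…,n}` -/
def relSet (n bn x : ℕ) : Finset ℕ :=
  (Finset.Icc 1 n).filter fun y => RMT.BRelevant n bn x y

lemma card_relSet_le {n bn x : ℕ} (hn : 0 < n) (hb : RMT.IsBandwidth n bn)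
    (hx1 : 1 ≤ x) (hx2 : x ≤ n) :
    (relSet n bn x).card ≤ bn := by
  rcases hb with ⟨hlt, hodd⟩ | heq
  · set h : ℕ := (bn - 1) / 2 with hh
    have hhb : 2 * h + 1 = bn := by rcases hodd with ⟨m, hm⟩; omega
    have hhn : h < n := by omega
    have hn' : (0:ℤ) < n := by exact_mod_cast hn
    have hx1' : (1:ℤ) ≤ (x:ℤ) := by exact_mod_cast hx1
    have hx2' : (x:ℤ) ≤ (n:ℤ) := by exact_mod_cast hx2
    have hcard : (relSet n bn x).card ≤
        ((Finset.Icc (0:ℤ) h) ∪ (Finset.Icc ((n:ℤ) - h) ((n:ℤ) - 1))).card := by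
      refine Finset.card_le_card_of_injOn (fun y : ℕ => ((y : ℤ) - (x : ℤ)) % (n : ℤ)) ?_ ?_
      · intro y hy
        simp only [Finset.mem_coe, relSet, mem_filter, Finset.mem_Icc] at hy
        obtain ⟨⟨hy1, hy2⟩, hrel⟩ := hy
        simp only [Finset.mem_coe, Finset.mem_union, Finset.mem_Icc]
        have hy1' : (1:ℤ) ≤ (y:ℤ) := by exact_mod_cast hy1
        have hy2' : (y:ℤ) ≤ (n:ℤ) := by exact_mod_cast hy2
        rcases le_or_gt (x:ℤ) (y:ℤ) with hxy | hxy
        · have he : |(x:ℤ) - y| = (y:ℤ) - x := by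
            rw [abs_sub_comm]; exact abs_of_nonneg (by omega)
          rw [Int.emod_eq_of_lt (by omega) (by omega)]
          rcases hrel with h1 | h2 | h3
          · exfalso; omega
          · rw [he] at h2; omega
          · rw [he] at h3; omega
        · have he : |(x:ℤ) - y| = (x:ℤ) - y := abs_of_nonneg (by omega)
          have hmod : ((y:ℤ) - x) % n = (y:ℤ) - x + n := by
            conv_lhs => rw [← Int.add_mul_emod_self_left (a := (y:ℤ) - x) (b := (n:ℤ)) (c := 1)]
            rw [mul_one]
            exact Int.emod_eq_of_lt (by omega) (by omega)
          rw [hmod]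
          rcases hrel with h1 | h2 | h3
          · exfalso; omega
          · rw [he] at h2; omega
          · rw [he] at h3; omega
      · intro y hy z hz hyz
        simp only [Finset.coe_filter, relSet, Set.mem_setOf_eq, Finset.mem_Icc] at hy hz
        have hyz' : ((y:ℤ) - x) % n = ((z:ℤ) - x) % n := hyz
        have hdvd : (n : ℤ) ∣ ((y : ℤ) - z) := by
          have heq2 : ((y:ℤ) - z) = ((y:ℤ) - x) - ((z:ℤ) - x) := by ring
          refine Int.dvd_of_emod_eq_zero ?_
          rw [heq2, Int.sub_emod, hyz', sub_self, Int.zero_emod]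
        rcases hdvd with ⟨c, hc⟩
        have h1 : 1 ≤ y := hy.1.1
        have h2 : y ≤ n := hy.1.2
        have h3 : 1 ≤ z := hz.1.1
        have h4 : z ≤ n := hz.1.2
        have hyz1 : -((n:ℤ) - 1) ≤ (y:ℤ) - z := by push_cast; omega
        have hyz2 : (y:ℤ) - z ≤ (n:ℤ) - 1 := by push_cast; omega
        have hc0 : c = 0 := by
          rcases lt_trichotomy c 0 with hlt' | he | hgt'
          · have : (n:ℤ) * c ≤ (n:ℤ) * (-1) :=
              mul_le_mul_of_nonneg_left (by omega) (by omega)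
            linarith
          · exact he
          · have : (n:ℤ) * 1 ≤ (n:ℤ) * c :=
              mul_le_mul_of_nonneg_left (by omega) (by omega)
            linarith
        rw [hc0, mul_zero] at hc
        omega
    refine hcard.trans ?_
    refine (Finset.card_union_le _ _).trans ?_
    rw [Int.card_Icc, Int.card_Icc]
    omega
  · -- bn = n
    refine (Finset.card_le_card (filter_subset _ _)).trans ?_
    rw [Nat.card_Icc]
    omega

/-- encoding of a relevant partner as a small number -/
def psi (n bn x y : ℕ) : ℕ := List.idxOf y ((relSet n bn x).sort (· ≤ ·))

lemma psi_lt {n bn B x y : ℕ} (hB : (relSet n bn x).card ≤ B) (hy : y ∈ relSet n bn x) :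
    psi n bn x y < B := by
  have h1 : y ∈ (relSet n bn x).sort (· ≤ ·) := by rwa [Finset.mem_sort]
  have h2 := List.idxOf_lt_length_iff.mpr h1
  rw [Finset.length_sort] at h2
  exact h2.trans_le hB

lemma psi_inj {n bn x y z : ℕ} (hy : y ∈ relSet n bn x) (hz : z ∈ relSet n bn x)
    (h : psi n bn x y = psi n bn x z) : y = z := by
  have hy' : y ∈ (relSet n bn x).sort (· ≤ ·) := by rwa [Finset.mem_sort]
  have hz' : z ∈ (relSet n bn x).sort (· ≤ ·) := by rwa [Finset.mem_sort]
  exact (List.idxOf_inj hy').mp h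

end Aux
namespace Aux
open Finset RMT

variable {k : ℕ}

lemma count_mem_Icc {t : Fin k → ℕ} {e : Sym2 ℕ} (he : e ∈ (tupleEdges t).toFinset) :
    (tupleEdges t).count e ∈ Finset.Icc 1 k := by
  rw [Finset.mem_Icc]
  refine ⟨?_, ?_⟩
  · rw [Nat.one_le_iff_ne_zero, Ne, Multiset.count_eq_zero]
    simpa using Multiset.mem_toFinset.mp he
  · calc (tupleEdges t).count e ≤ Multiset.card (tupleEdges t) := Multiset.count_le_card _ _
    _ = k := card_tupleEdges t

lemma sum_kappa (t : Fin k → ℕ) :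
    ∑ l ∈ Finset.Icc 1 k, kappa t l = (tupleEdges t).toFinset.card := by
  rw [eq_comm]
  exact Finset.card_eq_sum_card_fiberwise (fun e he => count_mem_Icc he)

lemma sameProfile_card {t u : Fin k → ℕ} (h : sameProfile t u) :
    (tupleEdges t).toFinset.card = (tupleEdges u).toFinset.card := by
  rw [← sum_kappa, ← sum_kappa]
  exact Finset.sum_congr rfl h

lemma hasOdd_transfer {t u : Fin k → ℕ} (h : sameProfile t u) (ho : hasOddEdge u) :
    hasOddEdge t := by
  obtain ⟨e, he, hodd⟩ := ho
  have hmem : (tupleEdges u).count e ∈ Finset.Icc 1 k := count_mem_Icc he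
  have h1 : 0 < kappa u ((tupleEdges u).count e) :=
    Finset.card_pos.mpr ⟨e, Finset.mem_filter.mpr ⟨he, rfl⟩⟩
  have h2 : 0 < kappa t ((tupleEdges u).count e) := by rw [h _ hmem]; exact h1
  unfold kappa at h2
  obtain ⟨f, hf⟩ := Finset.card_pos.mp h2
  rw [Finset.mem_filter] at hf
  exact ⟨f, hf.1, hf.2 ▸ hodd⟩

lemma even_sum_counts {u : Fin k → ℕ} (he : hasOnlyEvenEdges u) :
    2 * (tupleEdges u).toFinset.card ≤ k := by
  have h1 : ∑ e ∈ (tupleEdges u).toFinset, (tupleEdges u).count e = k := by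
    rw [Multiset.toFinset_sum_count_eq, card_tupleEdges]
  calc 2 * (tupleEdges u).toFinset.card = ∑ _e ∈ (tupleEdges u).toFinset, 2 := by
        rw [Finset.sum_const, smul_eq_mul, mul_comm]
  _ ≤ ∑ e ∈ (tupleEdges u).toFinset, (tupleEdges u).count e := by
        refine Finset.sum_le_sum (fun e hemem => ?_)
        obtain ⟨c, hc⟩ := he e hemem
        have h2 : 1 ≤ (tupleEdges u).count e :=
          Multiset.one_le_count_iff_mem.mpr (Multiset.mem_toFinset.mp hemem)
        omega
  _ = k := h1

lemma one_le_edgecount (hk : 0 < k) (t : Fin k → ℕ) : 1 ≤ (tupleEdges t).toFinset.card := by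
  refine Finset.card_pos.mpr ?_
  exact ⟨_, (mem_tupleEdges hk t _).mpr ⟨0, hk, rfl⟩⟩

end Aux
namespace Aux
open Finset RMT

variable {k : ℕ}

def isNew (W : ℕ → ℕ) (r : ℕ) : Prop := ∀ j < r, W j ≠ W r

/-- step `r` is a fresh-vertex step not along a marked edge -/
def isA (k : ℕ) (W : ℕ → ℕ) (CE : Finset (Sym2 ℕ)) (r : ℕ) : Prop :=
  1 ≤ r ∧ r < k ∧ s(W (r-1), W r) ∉ CE ∧ isNew W r

def acount (k : ℕ) (W : ℕ → ℕ) (CE : Finset (Sym2 ℕ)) : ℕ :=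
  ((Finset.range k).filter (isA k W CE)).card

def cacount (k : ℕ) (W : ℕ → ℕ) (CE : Finset (Sym2 ℕ)) (r : ℕ) : ℕ :=
  ((Finset.range r).filter (isA k W CE)).card

def bptr (W : ℕ → ℕ) (r : ℕ) : ℕ :=
  if h : ∃ j, j < r ∧ W j = W r then Nat.find h else 0

def cpos (t : Fin k → ℕ) (W : ℕ → ℕ) (r : ℕ) : ℕ :=
  if h : ∃ i, i < k ∧ s(Tx t i, Tx t (i+1)) = s(W (r-1), W r) then Nat.find h else 0

def dcode (t : Fin k → ℕ) (W : ℕ → ℕ) (CE : Finset (Sym2 ℕ)) : Fin k → ℕ := fun r =>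
  if r.1 = 0 then 0
  else if s(W (r.1-1), W r.1) ∈ CE then k + cpos t W r.1
  else if isNew W r.1 then r.1
  else bptr W r.1

def gcode (n bn k : ℕ) (W : ℕ → ℕ) (CE : Finset (Sym2 ℕ)) : Fin k → ℕ := fun m =>
  if h : ∃ r, r < k ∧ isA k W CE r ∧ cacount k W CE r = m.1 then
    psi n bn (W (Nat.find h - 1)) (W (Nat.find h)) else 0

section walk
variable {W W' : ℕ → ℕ} {CE CE' : Finset (Sym2 ℕ)} {t : Fin k → ℕ}

lemma cacount_lt_filter {r r' : ℕ} (hr : isA k W CE r) (hlt : r < r') :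
    cacount k W CE r < ((Finset.range r').filter (isA k W CE)).card := by
  have hsub : insert r ((Finset.range r).filter (isA k W CE)) ⊆
      (Finset.range r').filter (isA k W CE) := by
    intro x hx
    rcases Finset.mem_insert.mp hx with rfl | hx
    · exact Finset.mem_filter.mpr ⟨Finset.mem_range.mpr hlt, hr⟩
    · rw [Finset.mem_filter, Finset.mem_range] at hx ⊢
      exact ⟨hx.1.trans hlt, hx.2⟩
  have hnotmem : r ∉ (Finset.range r).filter (isA k W CE) := by
    simp [Finset.mem_filter]
  calc cacount k W CE r < (insert r ((Finset.range r).filter (isA k W CE))).card := by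
        rw [Finset.card_insert_of_notMem hnotmem]; exact Nat.lt_succ_self _
  _ ≤ _ := Finset.card_le_card hsub

lemma cacount_lt_acount {r : ℕ} (hr : isA k W CE r) :
    cacount k W CE r < acount k W CE := cacount_lt_filter hr hr.2.1

lemma cacount_strict_mono {r r' : ℕ} (hr : isA k W CE r) (hlt : r < r') :
    cacount k W CE r < cacount k W CE r' := cacount_lt_filter hr hlt

lemma isA_cacount_injective {r r' : ℕ} (hr : isA k W CE r) (hr' : isA k W CE r')
    (h : cacount k W CE r = cacount k W CE r') : r = r' := by
  rcases lt_trichotomy r r' with hlt | he | hgt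
  · exact absurd h (cacount_strict_mono hr hlt).ne
  · exact he
  · exact absurd h.symm (cacount_strict_mono hr' hgt).ne

lemma cacount_le_self (r : ℕ) : cacount k W CE r ≤ r :=
  (Finset.card_filter_le _ _).trans (Finset.card_range r).le

lemma gcode_isA {n bn : ℕ} {r : ℕ} (hr : isA k W CE r) (hm : cacount k W CE r < k) :
    gcode n bn k W CE ⟨cacount k W CE r, hm⟩ = psi n bn (W (r-1)) (W r) := by
  have hex : ∃ r', r' < k ∧ isA k W CE r' ∧ cacount k W CE r' = cacount k W CE r :=
    ⟨r, hr.2.1, hr, rfl⟩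
  unfold gcode
  rw [dif_pos hex]
  obtain ⟨-, h2, h3⟩ := Nat.find_spec hex
  rw [isA_cacount_injective h2 hr h3]

lemma gcode_zero {n bn M : ℕ} {m : Fin k} (hM : acount k W CE ≤ M) (hm : M ≤ m.1) :
    gcode n bn k W CE m = 0 := by
  unfold gcode
  rw [dif_neg]
  rintro ⟨r, -, hA, hc⟩
  have := cacount_lt_acount hA
  omega

lemma gcode_lt {n bn B : ℕ} (hn : 0 < n) (hb : RMT.IsBandwidth n bn) (hB : 1 ≤ B)
    (hBb : bn ≤ B)
    (hIcc : ∀ r, r < k → W r ∈ Finset.Icc 1 n)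
    (hrel : ∀ r, 1 ≤ r → r < k → W r ∈ relSet n bn (W (r-1)))
    (m : Fin k) : gcode n bn k W CE m < B := by
  unfold gcode
  split
  · next h =>
    obtain ⟨hlt, hA, -⟩ := Nat.find_spec h
    have h1 : 1 ≤ Nat.find h := hA.1
    have hx := hIcc (Nat.find h - 1) (by omega)
    rw [Finset.mem_Icc] at hx
    exact psi_lt ((card_relSet_le hn hb hx.1 hx.2).trans hBb) (hrel _ h1 hlt)
  · omega

lemma cpos_spec (hk : 0 < k) {r : ℕ} (h : s(W (r-1), W r) ∈ (tupleEdges t).toFinset) :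
    cpos t W r < k ∧ s(Tx t (cpos t W r), Tx t (cpos t W r + 1)) = s(W (r-1), W r) := by
  obtain ⟨i, hi, he⟩ := (mem_tupleEdges hk t _).mp h
  have hex : ∃ i, i < k ∧ s(Tx t i, Tx t (i+1)) = s(W (r-1), W r) := ⟨i, hi, he⟩
  unfold cpos
  rw [dif_pos hex]
  exact ⟨(Nat.find_spec hex).1, (Nat.find_spec hex).2⟩

lemma bptr_spec {r : ℕ} (h : ¬ isNew W r) : bptr W r < r ∧ W (bptr W r) = W r := by
  unfold isNew at h
  push_neg at h
  obtain ⟨j, hj, he⟩ := h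
  have hex : ∃ j, j < r ∧ W j = W r := ⟨j, hj, he⟩
  unfold bptr
  rw [dif_pos hex]
  exact ⟨(Nat.find_spec hex).1, (Nat.find_spec hex).2⟩

lemma isA_iff_dcode {r : Fin k} (h1 : 1 ≤ r.1) :
    isA k W CE r.1 ↔ (r.1 ≤ dcode t W CE r ∧ dcode t W CE r < k) := by
  unfold dcode
  rw [if_neg (by omega)]
  constructor
  · intro hA
    rw [if_neg hA.2.2.1, if_pos hA.2.2.2]
    exact ⟨le_refl _, r.2⟩
  · intro hcond
    by_cases h2 : s(W (r.1-1), W r.1) ∈ CE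
    · rw [if_pos h2] at hcond; omega
    · rw [if_neg h2] at hcond
      by_cases h3 : isNew W r.1
      · exact ⟨h1, r.2, h2, h3⟩
      · rw [if_neg h3] at hcond
        have := (bptr_spec h3).1
        omega

lemma cacount_eq_of_dcode {t' : Fin k → ℕ} (h : dcode t W CE = dcode t' W' CE')
    {r : ℕ} (hr : r ≤ k) : cacount k W CE r = cacount k W' CE' r := by
  unfold cacount
  congr 1
  apply Finset.filter_congr
  intro x hx
  rw [Finset.mem_range] at hx
  have hxk : x < k := lt_of_lt_of_le hx hr
  by_cases h1 : 1 ≤ x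
  · rw [show x = (⟨x, hxk⟩ : Fin k).1 from rfl,
      isA_iff_dcode (t := t) h1, isA_iff_dcode (t := t') h1, h]
  · simp only [isA]
    omega

lemma acount_le_sub {E₀ : Finset (Sym2 ℕ)}
    (hedge : ∀ r, 1 ≤ r → r < k → s(W (r-1), W r) ∈ E₀) (hCE : CE ⊆ E₀) :
    acount k W CE + CE.card ≤ E₀.card := by
  have hinj : Set.InjOn (fun r => s(W (r-1), W r))
      ((Finset.range k).filter (isA k W CE)) := by
    intro a ha b hb hab
    simp only [Finset.coe_filter, Set.mem_setOf_eq, Finset.mem_range] at ha hb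
    by_contra hne
    have key : ∀ a b : ℕ, isA k W CE b → a < b → s(W (a-1), W a) ≠ s(W (b-1), W b) := by
      intro a b hBnew hab2 heq
      rcases Sym2.eq_iff.mp heq with ⟨h1, h2⟩ | ⟨h1, h2⟩
      · exact hBnew.2.2.2 a hab2 h2
      · exact hBnew.2.2.2 (a-1) (by omega) h1
    rcases lt_or_gt_of_ne hne with hl | hl
    · exact key a b hb.2 hl hab
    · exact key b a ha.2 hl hab.symm
  have himg : Finset.image (fun r => s(W (r-1), W r))
      ((Finset.range k).filter (isA k W CE)) ⊆ E₀ \ CE := by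
    intro e he
    obtain ⟨r, hr, rfl⟩ := Finset.mem_image.mp he
    rw [Finset.mem_filter, Finset.mem_range] at hr
    rw [Finset.mem_sdiff]
    exact ⟨hedge r hr.2.1 hr.1, hr.2.2.2.1⟩
  calc acount k W CE + CE.card
      = (Finset.image (fun r => s(W (r-1), W r))
          ((Finset.range k).filter (isA k W CE))).card + CE.card := by
        unfold acount
        rw [Finset.card_image_of_injOn hinj]
  _ ≤ (E₀ \ CE).card + CE.card := by
        exact Nat.add_le_add_right (Finset.card_le_card himg) _
  _ = E₀.card := by
        rw [Finset.card_sdiff_of_subset hCE, Nat.sub_add_cancel (Finset.card_le_card hCE)]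

end walk
end Aux
namespace Aux
open Finset RMT

variable {k : ℕ}

def crossP (p : ℕ → Prop) (e : Sym2 ℕ) : Prop := ∃ a c, e = s(a,c) ∧ ¬(p a ↔ p c)

lemma crossP_sym2 (p : ℕ → Prop) (x y : ℕ) : crossP p s(x,y) ↔ ¬(p x ↔ p y) := by
  constructor
  · rintro ⟨a, c, he, h⟩
    rcases Sym2.eq_iff.mp he with ⟨rfl, rfl⟩ | ⟨rfl, rfl⟩
    · exact h
    · tauto
  · intro h; exact ⟨x, y, rfl, h⟩

lemma even_crosscard (hk : 0 < k) (t : Fin k → ℕ) (p : ℕ → Prop) :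
    Even (((univ : Finset (Fin k)).filter
      fun i => crossP p s(Tx t i.1, Tx t (i.1+1))).card) := by
  set g : Fin k → ZMod 2 := fun i => if p (Tx t i.1) then 1 else 0 with hg
  set σ : Fin k → Fin k := fun i => (⟨(i.1+1) % k, Nat.mod_lt _ hk⟩ : Fin k) with hσ
  have hσbij : Function.Bijective σ := by
    rw [← Finite.injective_iff_bijective]
    intro a b hab
    have h1 : (a.1+1) % k = (b.1+1) % k := congrArg Fin.val hab
    have h2 : a.1 < k := a.2
    have h3 : b.1 < k := b.2
    have ha' : (a.1+1) % k = if a.1+1 = k then 0 else a.1+1 := by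
      split
      · next h => rw [h, Nat.mod_self]
      · next h => exact Nat.mod_eq_of_lt (by omega)
    have hb' : (b.1+1) % k = if b.1+1 = k then 0 else b.1+1 := by
      split
      · next h => rw [h, Nat.mod_self]
      · next h => exact Nat.mod_eq_of_lt (by omega)
    rw [ha', hb'] at h1
    apply Fin.ext
    split at h1 <;> split at h1 <;> omega
  have hcast : ((((univ : Finset (Fin k)).filter
      fun i => crossP p s(Tx t i.1, Tx t (i.1+1))).card : ℕ) : ZMod 2) = 0 := by
    rw [Finset.card_filter]
    push_cast
    have hpt : ∀ i : Fin k, ((if crossP p s(Tx t i.1, Tx t (i.1+1)) then (1:ZMod 2) else 0))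
        = g i + g (σ i) := by
      intro i
      have hTx : Tx t ((i.1+1) % k) = Tx t (i.1+1) := Tx_mod t _
      have hcross := crossP_sym2 p (Tx t i.1) (Tx t (i.1+1))
      have hgσ : g (σ i) = if p (Tx t (i.1+1)) then (1:ZMod 2) else 0 := by
        rw [hg, hσ]
        simp only [hTx]
      rw [hgσ, hg]
      simp only []
      by_cases h1 : p (Tx t i.1) <;> by_cases h2 : p (Tx t (i.1+1))
      · rw [if_neg (by rw [hcross]; tauto), if_pos h1, if_pos h2]; decide
      · rw [if_pos (by rw [hcross]; tauto), if_pos h1, if_neg h2]; decide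
      · rw [if_pos (by rw [hcross]; tauto), if_neg h1, if_pos h2]; decide
      · rw [if_neg (by rw [hcross]; tauto), if_neg h1, if_neg h2]; decide
    rw [Finset.sum_congr rfl (fun i _ => hpt i), Finset.sum_add_distrib,
      Function.Bijective.sum_comp hσbij g]
    rw [← two_mul]
    have h2 : (2 : ZMod 2) = 0 := by decide
    rw [h2, zero_mul]
  rw [even_iff_two_dvd]
  exact (ZMod.natCast_eq_zero_iff _ 2).mp hcast

lemma card_cross_eq_sum (hk : 0 < k) (t : Fin k → ℕ) (p : ℕ → Prop) :
    ((univ : Finset (Fin k)).filter fun i => crossP p s(Tx t i.1, Tx t (i.1+1))).card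
      = ∑ e ∈ (tupleEdges t).toFinset.filter (crossP p), (tupleEdges t).count e := by
  rw [Finset.card_eq_sum_card_fiberwise
    (f := fun i : Fin k => s(Tx t i.1, Tx t (i.1+1)))
    (t := (tupleEdges t).toFinset.filter (crossP p))
    (fun i hi => by
      simp only [Finset.mem_coe] at hi ⊢
      rw [Finset.mem_filter] at hi ⊢
      exact ⟨(mem_tupleEdges hk t _).mpr ⟨i.1, i.2, rfl⟩, hi.2⟩)]
  refine Finset.sum_congr rfl (fun e he => ?_)
  rw [Finset.mem_filter] at he
  rw [count_tupleEdges hk]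
  congr 1
  rw [Finset.filter_filter]
  refine Finset.filter_congr (fun i _ => ?_)
  constructor
  · rintro ⟨-, h⟩; exact h
  · intro h; exact ⟨h ▸ he.2, h⟩

def birth (W : ℕ → ℕ) (x : ℕ) : ℕ := sInf {j | W j = x}

lemma birth_le (W : ℕ → ℕ) (j : ℕ) : birth W (W j) ≤ j := Nat.sInf_le rfl

lemma birth_isNew {W : ℕ → ℕ} {r : ℕ} (h : isNew W r) : birth W (W r) = r := by
  refine le_antisymm (birth_le W r) ?_
  by_contra hlt
  push_neg at hlt
  have hmem : W (birth W (W r)) = W r := Nat.sInf_mem (⟨r, rfl⟩ : {j | W j = W r}.Nonempty)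
  exact h _ hlt hmem

/-- If `t` has an odd edge, the number of fresh-vertex steps is at most `e(t) - 1`. -/
lemma acount_add_one_le (hk : 0 < k) (t : Fin k → ℕ) (hodd : hasOddEdge t) :
    acount k (Tx t) (∅ : Finset (Sym2 ℕ)) + 1 ≤ (tupleEdges t).toFinset.card := by
  set W := Tx t with hW
  have hedge : ∀ r, 1 ≤ r → r < k → s(W (r-1), W r) ∈ (tupleEdges t).toFinset := by
    intro r h1 h2
    exact (mem_tupleEdges hk t _).mpr ⟨r-1, by omega, by rw [Nat.sub_add_cancel h1]⟩
  by_contra hcon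
  push_neg at hcon
  have hge : (tupleEdges t).toFinset.card ≤ acount k W ∅ := by omega
  -- the A-step edge map is injective and hence surjective onto the edge set
  have hinj : Set.InjOn (fun r => s(W (r-1), W r))
      ((Finset.range k).filter (isA k W ∅)) := by
    intro a ha b hb hab
    simp only [Finset.coe_filter, Set.mem_setOf_eq, Finset.mem_range] at ha hb
    by_contra hne
    have key : ∀ a b : ℕ, isA k W ∅ b → a < b → s(W (a-1), W a) ≠ s(W (b-1), W b) := by
      intro a b hBnew hab2 heq
      rcases Sym2.eq_iff.mp heq with ⟨h1, h2⟩ | ⟨h1, h2⟩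
      · exact hBnew.2.2.2 a hab2 h2
      · exact hBnew.2.2.2 (a-1) (by omega) h1
    rcases lt_or_gt_of_ne hne with hl | hl
    · exact key a b hb.2 hl hab
    · exact key b a ha.2 hl hab.symm
  have himg : Finset.image (fun r => s(W (r-1), W r))
      ((Finset.range k).filter (isA k W ∅)) ⊆ (tupleEdges t).toFinset := by
    intro e he
    obtain ⟨r, hr, rfl⟩ := Finset.mem_image.mp he
    rw [Finset.mem_filter, Finset.mem_range] at hr
    exact hedge r hr.2.1 hr.1
  have heq : Finset.image (fun r => s(W (r-1), W r))
      ((Finset.range k).filter (isA k W ∅)) = (tupleEdges t).toFinset := by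
    refine Finset.eq_of_subset_of_card_le himg ?_
    rw [Finset.card_image_of_injOn hinj]
    exact hge
  have Hsurj : ∀ e ∈ (tupleEdges t).toFinset, ∃ r, isA k W ∅ r ∧ s(W (r-1), W r) = e := by
    intro e he
    rw [← heq] at he
    obtain ⟨r, hr, hre⟩ := Finset.mem_image.mp he
    rw [Finset.mem_filter] at hr
    exact ⟨r, hr.2, hre⟩
  -- downward induction: every A-step edge has even multiplicity
  have key : ∀ m r, isA k W ∅ r → k - r ≤ m → Even ((tupleEdges t).count s(W (r-1), W r)) := by
    intro m
    induction m with
    | zero => intro r hr h0; exfalso; have := hr.2.1; omega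
    | succ m ih =>
      intro r hr hm
      set p : ℕ → Prop := fun x => r ≤ birth W x with hp
      have heven := even_crosscard hk t p
      rw [card_cross_eq_sum hk t p] at heven
      set Fc := (tupleEdges t).toFinset.filter (crossP p) with hFc
      have hbr : birth W (W r) = r := birth_isNew hr.2.2.2
      have hfi_mem : s(W (r-1), W r) ∈ Fc := by
        refine Finset.mem_filter.mpr ⟨hedge r hr.1 hr.2.1, ?_⟩
        refine ⟨W (r-1), W r, rfl, ?_⟩
        have hb2 : birth W (W (r-1)) ≤ r-1 := birth_le W (r-1)
        have h1 := hr.1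
        rw [hp]
        simp only []
        rw [hbr]
        intro hiff
        have := hiff.mpr (le_refl r)
        omega
      have hsum : ∑ e ∈ Fc, (tupleEdges t).count e
          = (tupleEdges t).count s(W (r-1), W r)
            + ∑ e ∈ Fc.erase s(W (r-1), W r), (tupleEdges t).count e :=
        (Finset.add_sum_erase _ _ hfi_mem).symm
      have hrest : ∀ e ∈ Fc.erase s(W (r-1), W r), Even ((tupleEdges t).count e) := by
        intro e hee
        obtain ⟨hne, heFc⟩ := Finset.mem_erase.mp hee
        obtain ⟨hemem, hcross⟩ := Finset.mem_filter.mp heFc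
        obtain ⟨r', hA', hre⟩ := Hsurj e hemem
        have hb1 : birth W (W r') = r' := birth_isNew hA'.2.2.2
        have hb2 : birth W (W (r'-1)) ≤ r'-1 := birth_le W (r'-1)
        have hcross' : ¬ (p (W (r'-1)) ↔ p (W r')) := by
          rw [← hre] at hcross
          exact (crossP_sym2 p _ _).mp hcross
        have hrr : r < r' := by
          by_contra hle
          push_neg at hle
          rcases eq_or_lt_of_le hle with he2 | hlt2
          · exact hne (he2 ▸ hre.symm ▸ rfl)
          · apply hcross'
            rw [hp]
            simp only []
            rw [hb1]
            have h1 := hA'.1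
            constructor <;> (intro; omega)
        rw [← hre]
        exact ih r' hA' (by omega)
      have heven2 : Even (∑ e ∈ Fc.erase s(W (r-1), W r), (tupleEdges t).count e) := by
        refine Finset.sum_induction _ Even (fun a b => Even.add) Even.zero ?_
        exact hrest
      rw [hsum] at heven
      exact (Nat.even_add.mp heven).mpr heven2
  have hall : ∀ e ∈ (tupleEdges t).toFinset, Even ((tupleEdges t).count e) := by
    intro e he
    obtain ⟨r, hA, hre⟩ := Hsurj e he
    exact hre ▸ key k r hA (by omega)
  obtain ⟨e, he, hoddc⟩ := hodd
  exact (Nat.not_odd_iff_even.mpr (hall e he)) hoddc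

end Aux
namespace Aux
open Finset RMT

variable {n bn k : ℕ}

lemma Tx_mem_Icc (hk : 0 < k) {t : Fin k → ℕ} (ht : t ∈ relTuples n bn k) (r : ℕ) :
    Tx t r ∈ Finset.Icc 1 n := by
  rw [relTuples, Finset.mem_filter] at ht
  rw [Tx_apply hk]
  exact (Fintype.mem_piFinset.mp ht.1) _

lemma Tx_brel (hk : 0 < k) {t : Fin k → ℕ} (ht : t ∈ relTuples n bn k) (r : ℕ) :
    BRelevant n bn (Tx t r) (Tx t (r+1)) := by
  rw [relTuples, Finset.mem_filter] at ht
  have h := ht.2 ⟨r % k, Nat.mod_lt _ hk⟩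
  have h1 : Tx t r = t ⟨r % k, Nat.mod_lt _ hk⟩ := Tx_apply hk t r
  have h2 : Tx t (r+1) = t (cyc ⟨r % k, Nat.mod_lt _ hk⟩) := by
    show Tx t (r+1) = t ⟨(r % k + 1) % k, _⟩
    rw [Tx_apply hk]
    congr 1
    apply Fin.ext
    show (r+1) % k = (r % k + 1) % k
    exact ((Nat.mod_modEq r k).symm.add_right 1)
  rw [h1, h2] at *
  exact h

lemma Tx_relSet (hk : 0 < k) {t : Fin k → ℕ} (ht : t ∈ relTuples n bn k) {r : ℕ}
    (h1 : 1 ≤ r) : Tx t r ∈ relSet n bn (Tx t (r-1)) := by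
  rw [relSet, Finset.mem_filter]
  refine ⟨Tx_mem_Icc hk ht r, ?_⟩
  have := Tx_brel hk ht (r-1)
  rwa [Nat.sub_add_cancel h1] at this

/-- common edges of a pair of tuples -/
def commonSet (t t' : Fin k → ℕ) : Finset (Sym2 ℕ) :=
  (tupleEdges t).toFinset ∩ (tupleEdges t').toFinset

def jpos (t t' : Fin k → ℕ) : ℕ :=
  sInf {j | j < k ∧ s(Tx t' j, Tx t' (j+1)) ∈ commonSet t t'}

/-- the walk of `t'` started at the anchor position -/
def Wk (t t' : Fin k → ℕ) : ℕ → ℕ := fun r => Tx t' (jpos t t' + r)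

def ipos (t t' : Fin k → ℕ) : ℕ :=
  sInf {i | i < k ∧ s(Tx t i, Tx t (i+1)) = s(Wk t t' 0, Wk t t' 1)}

def bitv (t t' : Fin k → ℕ) : ℕ := if Wk t t' 0 = Tx t (ipos t t') then 0 else 1

lemma jpos_spec (hk : 0 < k) {t t' : Fin k → ℕ} (hne : (commonSet t t').Nonempty) :
    jpos t t' < k ∧ s(Tx t' (jpos t t'), Tx t' (jpos t t' + 1)) ∈ commonSet t t' := by
  obtain ⟨e, he⟩ := hne
  have he' : e ∈ (tupleEdges t').toFinset := (Finset.mem_inter.mp he).2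
  obtain ⟨j, hj, hje⟩ := (mem_tupleEdges hk t' e).mp he'
  have hnonempty : {j | j < k ∧ s(Tx t' j, Tx t' (j+1)) ∈ commonSet t t'}.Nonempty :=
    ⟨j, hj, hje ▸ he⟩
  exact Nat.sInf_mem hnonempty

lemma ipos_spec (hk : 0 < k) {t t' : Fin k → ℕ} (hne : (commonSet t t').Nonempty) :
    ipos t t' < k ∧
      s(Tx t (ipos t t'), Tx t (ipos t t' + 1)) = s(Wk t t' 0, Wk t t' 1) := by
  obtain ⟨hjk, hjmem⟩ := jpos_spec hk hne
  have h0 : Wk t t' 0 = Tx t' (jpos t t') := by rw [Wk, Nat.add_zero]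
  have h1 : Wk t t' 1 = Tx t' (jpos t t' + 1) := rfl
  have hmem : s(Wk t t' 0, Wk t t' 1) ∈ (tupleEdges t).toFinset := by
    rw [h0, h1]
    exact (Finset.mem_inter.mp hjmem).1
  obtain ⟨i, hi, hie⟩ := (mem_tupleEdges hk t _).mp hmem
  exact Nat.sInf_mem (⟨i, hi, hie⟩ :
    {i | i < k ∧ s(Tx t i, Tx t (i+1)) = s(Wk t t' 0, Wk t t' 1)}.Nonempty)

lemma Wk_mem_Icc (hk : 0 < k) {t t' : Fin k → ℕ} (ht' : t' ∈ relTuples n bn k) (r : ℕ) :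
    Wk t t' r ∈ Finset.Icc 1 n := Tx_mem_Icc hk ht' _

lemma Wk_relSet (hk : 0 < k) {t t' : Fin k → ℕ} (ht' : t' ∈ relTuples n bn k) {r : ℕ}
    (h1 : 1 ≤ r) : Wk t t' r ∈ relSet n bn (Wk t t' (r-1)) := by
  have h2 : Wk t t' (r-1) = Tx t' (jpos t t' + r - 1) := by
    rw [Wk]
    congr 1
    omega
  rw [h2, Wk]
  have h3 : jpos t t' + r - 1 = (jpos t t' + r) - 1 := rfl
  have := Tx_relSet hk ht' (r := jpos t t' + r) (by omega)
  rwa [h3]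

lemma Wk_edge_mem (hk : 0 < k) {t t' : Fin k → ℕ} {r : ℕ} (h1 : 1 ≤ r) :
    s(Wk t t' (r-1), Wk t t' r) ∈ (tupleEdges t').toFinset := by
  refine (mem_tupleEdges hk t' _).mpr ⟨(jpos t t' + r - 1) % k, Nat.mod_lt _ hk, ?_⟩
  have e1 : Tx t' ((jpos t t' + r - 1) % k) = Wk t t' (r-1) := by
    rw [Tx_mod, Wk]
    congr 1
    omega
  have e2 : Tx t' ((jpos t t' + r - 1) % k + 1) = Wk t t' r := by
    rw [Wk]
    apply Tx_congr
    have : ((jpos t t' + r - 1) % k + 1) % k = ((jpos t t' + r - 1) + 1) % k :=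
      ((Nat.mod_modEq (jpos t t' + r - 1) k).add_right 1)
    rw [this]
    congr 1
    omega
  rw [e1, e2]

lemma dcode_empty_ref {t t'' : Fin k → ℕ} (W : ℕ → ℕ) :
    dcode t W (∅ : Finset (Sym2 ℕ)) = dcode t'' W ∅ := by
  funext r
  unfold dcode
  simp only [Finset.notMem_empty, if_false]

/-- the walk is determined by its code -/
lemma walk_determined (hk : 0 < k) (t : Fin k → ℕ) (W W' : ℕ → ℕ)
    (CE CE' : Finset (Sym2 ℕ))
    (hCE : CE ⊆ (tupleEdges t).toFinset) (hCE' : CE' ⊆ (tupleEdges t).toFinset)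
    (hrel : ∀ r, 1 ≤ r → r < k → W r ∈ relSet n bn (W (r-1)))
    (hrel' : ∀ r, 1 ≤ r → r < k → W' r ∈ relSet n bn (W' (r-1)))
    (h0 : W 0 = W' 0)
    (hd : dcode t W CE = dcode t W' CE')
    (hg : gcode n bn k W CE = gcode n bn k W' CE') :
    ∀ r, r < k → W r = W' r := by
  intro r
  induction r using Nat.strong_induction_on with
  | _ r ih =>
    intro hrk
    rcases Nat.eq_zero_or_pos r with rfl | h1
    · exact h0
    have hdr : dcode t W CE ⟨r, hrk⟩ = dcode t W' CE' ⟨r, hrk⟩ := by rw [hd]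
    have hcases : ∀ (V : ℕ → ℕ) (C : Finset (Sym2 ℕ)),
        (s(V (r-1), V r) ∈ C ∧ dcode t V C ⟨r, hrk⟩ = k + cpos t V r) ∨
        (s(V (r-1), V r) ∉ C ∧ isNew V r ∧ dcode t V C ⟨r, hrk⟩ = r) ∨
        (s(V (r-1), V r) ∉ C ∧ ¬ isNew V r ∧ dcode t V C ⟨r, hrk⟩ = bptr V r) := by
      intro V C
      unfold dcode
      simp only []
      rw [if_neg (by omega : ¬ r = 0)]
      by_cases hC : s(V (r-1), V r) ∈ C
      · left; rw [if_pos hC]; exact ⟨hC, rfl⟩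
      · rw [if_neg hC]
        by_cases hN : isNew V r
        · right; left; rw [if_pos hN]; exact ⟨hC, hN, rfl⟩
        · right; right; rw [if_neg hN]; exact ⟨hC, hN, rfl⟩
    have hWm1 : W (r-1) = W' (r-1) := ih (r-1) (by omega) (by omega)
    rcases hcases W CE with ⟨hC, hv⟩ | ⟨hC, hN, hv⟩ | ⟨hC, hN, hv⟩ <;>
      rcases hcases W' CE' with ⟨hC', hv'⟩ | ⟨hC', hN', hv'⟩ | ⟨hC', hN', hv'⟩
    -- C / C
    · have hq : cpos t W r = cpos t W' r := by
        have := hdr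
        rw [hv, hv'] at this
        omega
      obtain ⟨hq1, hq2⟩ := cpos_spec hk (hCE hC)
      obtain ⟨hq1', hq2'⟩ := cpos_spec hk (hCE' hC')
      rw [← hq] at hq2'
      have hedge : s(W (r-1), W r) = s(W' (r-1), W' r) := by rw [← hq2, hq2']
      rw [hWm1] at hedge
      exact Sym2.congr_right.mp hedge
    · exfalso
      have hb := (cpos_spec hk (hCE hC)).1
      rw [hv, hv'] at hdr
      omega
    · exfalso
      have hb := (bptr_spec hN').1
      rw [hv, hv'] at hdr
      omega
    · exfalso
      have hb := (cpos_spec hk (hCE' hC')).1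
      rw [hv, hv'] at hdr
      omega
    -- A / A
    · have hA : isA k W CE r := ⟨h1, hrk, hC, hN⟩
      have hA' : isA k W' CE' r := ⟨h1, hrk, hC', hN'⟩
      have hca : cacount k W CE r = cacount k W' CE' r :=
        cacount_eq_of_dcode hd (le_of_lt hrk)
      have hlt1 : cacount k W CE r < k := lt_of_le_of_lt (cacount_le_self r) hrk
      have hlt2 : cacount k W' CE' r < k := lt_of_le_of_lt (cacount_le_self r) hrk
      have hg1 := gcode_isA (n := n) (bn := bn) hA hlt1
      have hg2 := gcode_isA (n := n) (bn := bn) hA' hlt2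
      have : psi n bn (W (r-1)) (W r) = psi n bn (W' (r-1)) (W' r) := by
        rw [← hg1, ← hg2]
        have : (⟨cacount k W CE r, hlt1⟩ : Fin k) = ⟨cacount k W' CE' r, hlt2⟩ :=
          Fin.ext hca
        rw [this, hg]
      have hm' := hrel' r h1 hrk
      rw [← hWm1] at this hm'
      exact psi_inj (hrel r h1 hrk) hm' this
    · exfalso
      have hb := (bptr_spec hN').1
      rw [hv, hv'] at hdr
      omega
    · exfalso
      have hb := (cpos_spec hk (hCE' hC')).1
      have hb2 := (bptr_spec hN).1
      rw [hv, hv'] at hdr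
      omega
    · exfalso
      have hb := (bptr_spec hN).1
      rw [hv, hv'] at hdr
      omega
    -- old / old
    · have hs := bptr_spec hN
      have hs' := bptr_spec hN'
      have hbb : bptr W r = bptr W' r := by rw [hv, hv'] at hdr; exact hdr
      have hih : W (bptr W r) = W' (bptr W r) := ih _ (by omega) (by omega)
      rw [← hs.2, hih, hbb, hs'.2]
end Aux
namespace Aux
open Finset RMT

variable {n bn k : ℕ}

def pairCode (n bn : ℕ) {k : ℕ} (p : (Fin k → ℕ) × (Fin k → ℕ)) :
    ℕ × (Fin k → ℕ) × (Fin k → ℕ) × ℕ × ℕ × ℕ × (Fin k → ℕ) × (Fin k → ℕ) :=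
  (Tx p.1 0,
   dcode p.1 (Tx p.1) ∅,
   gcode n bn k (Tx p.1) ∅,
   jpos p.1 p.2,
   ipos p.1 p.2,
   bitv p.1 p.2,
   dcode p.1 (Wk p.1 p.2) (commonSet p.1 p.2),
   gcode n bn k (Wk p.1 p.2) (commonSet p.1 p.2))

lemma Wk_recover (hk : 0 < k) (t t' : Fin k → ℕ) (hjk : jpos t t' < k) (x : Fin k) :
    Wk t t' ((x.1 + k - jpos t t') % k) = t' x := by
  rw [Wk, ← Tx_fin t' x]
  apply Tx_congr
  have h1 : (jpos t t' + (x.1 + k - jpos t t') % k) % k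
      = (jpos t t' + (x.1 + k - jpos t t')) % k :=
    (Nat.mod_modEq _ k).add_left (jpos t t')
  rw [h1]
  rcases le_or_gt (jpos t t') (x.1 + k) with hle | hlt
  · have h2 : jpos t t' + (x.1 + k - jpos t t') = x.1 + k := by omega
    rw [h2, Nat.add_mod_right]
  · exfalso
    have := x.2
    omega

lemma pairCode_injOn (hk : 0 < k) (S : Finset ((Fin k → ℕ) × (Fin k → ℕ)))
    (hS : ∀ p ∈ S, p.1 ∈ relTuples n bn k ∧ p.2 ∈ relTuples n bn k ∧
      (commonSet p.1 p.2).Nonempty) :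
    Set.InjOn (pairCode n bn) (↑S : Set ((Fin k → ℕ) × (Fin k → ℕ))) := by
  intro p hp q hq he
  obtain ⟨hp1, hp2, hpne⟩ := hS p (Finset.mem_coe.mp hp)
  obtain ⟨hq1, hq2, hqne⟩ := hS q (Finset.mem_coe.mp hq)
  simp only [pairCode, Prod.mk.injEq] at he
  obtain ⟨h0, hd1, hg1, hj, hi, hb, hd2, hg2⟩ := he
  have hrel1 : ∀ r, 1 ≤ r → r < k → Tx p.1 r ∈ relSet n bn (Tx p.1 (r-1)) :=
    fun r h1 _ => Tx_relSet hk hp1 h1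
  have hrel1' : ∀ r, 1 ≤ r → r < k → Tx q.1 r ∈ relSet n bn (Tx q.1 (r-1)) :=
    fun r h1 _ => Tx_relSet hk hq1 h1
  have hd1' : dcode p.1 (Tx p.1) ∅ = dcode p.1 (Tx q.1) ∅ :=
    hd1.trans (dcode_empty_ref (t := q.1) (t'' := p.1) (Tx q.1))
  have hteq : ∀ r, r < k → Tx p.1 r = Tx q.1 r :=
    walk_determined hk p.1 (Tx p.1) (Tx q.1) ∅ ∅ (Finset.empty_subset _)
      (Finset.empty_subset _) hrel1 hrel1' h0 hd1' hg1
  have ht : p.1 = q.1 := by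
    funext i
    rw [← Tx_fin p.1 i, ← Tx_fin q.1 i]
    exact hteq i.1 i.2
  rw [← ht] at hj hi hb hd2 hg2 hqne
  -- anchors agree
  have e1 := (ipos_spec hk hpne).2
  have e2 := (ipos_spec hk hqne).2
  rw [← hi] at e2
  have hanchW : Wk p.1 p.2 0 = Wk p.1 q.2 0 := by
    have hbb : (if Wk p.1 p.2 0 = Tx p.1 (ipos p.1 p.2) then (0:ℕ) else 1)
        = (if Wk p.1 q.2 0 = Tx p.1 (ipos p.1 p.2) then (0:ℕ) else 1) := by
      have h2 : bitv p.1 q.2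
          = if Wk p.1 q.2 0 = Tx p.1 (ipos p.1 p.2) then (0:ℕ) else 1 := by
        rw [bitv, ← hi]
      rw [← h2, ← hb, bitv]
    by_cases h1 : Wk p.1 p.2 0 = Tx p.1 (ipos p.1 p.2) <;>
      by_cases h2 : Wk p.1 q.2 0 = Tx p.1 (ipos p.1 p.2)
    · rw [h1, h2]
    · rw [if_pos h1, if_neg h2] at hbb; omega
    · rw [if_neg h1, if_pos h2] at hbb; omega
    · have hw1 : Wk p.1 p.2 0 = Tx p.1 (ipos p.1 p.2 + 1) := by
        rcases Sym2.eq_iff.mp e1 with ⟨ha1, hc1⟩ | ⟨ha1, hc1⟩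
        · exact absurd ha1.symm h1
        · exact hc1.symm
      have hw2 : Wk p.1 q.2 0 = Tx p.1 (ipos p.1 p.2 + 1) := by
        rcases Sym2.eq_iff.mp e2 with ⟨ha2, hc2⟩ | ⟨ha2, hc2⟩
        · exact absurd ha2.symm h2
        · exact hc2.symm
      rw [hw1, hw2]
  -- both walks are determined by the common code
  have hrelW : ∀ r, 1 ≤ r → r < k → Wk p.1 p.2 r ∈ relSet n bn (Wk p.1 p.2 (r-1)) :=
    fun r h1 _ => Wk_relSet hk hp2 h1
  have hrelW' : ∀ r, 1 ≤ r → r < k → Wk p.1 q.2 r ∈ relSet n bn (Wk p.1 q.2 (r-1)) :=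
    fun r h1 _ => Wk_relSet hk hq2 h1
  have hweq : ∀ r, r < k → Wk p.1 p.2 r = Wk p.1 q.2 r :=
    walk_determined hk p.1 _ _ _ _ Finset.inter_subset_left Finset.inter_subset_left
      hrelW hrelW' hanchW hd2 hg2
  have ht2 : p.2 = q.2 := by
    funext x
    have hr : (x.1 + k - jpos p.1 p.2) % k < k := Nat.mod_lt _ hk
    have hjk1 : jpos p.1 p.2 < k := (jpos_spec hk hpne).1
    have hjk2 : jpos p.1 q.2 < k := (jpos_spec hk hqne).1
    have r1 := Wk_recover hk p.1 p.2 hjk1 x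
    have r2 := Wk_recover hk p.1 q.2 hjk2 x
    rw [← hj] at r2
    rw [← r1, ← r2]
    exact hweq _ hr
  exact Prod.ext ht ht2

end Aux
namespace Aux
open Finset RMT

variable {n bn k : ℕ}

def codeFinset (n k B M₁ M₂ : ℕ) :
    Finset (ℕ × (Fin k → ℕ) × (Fin k → ℕ) × ℕ × ℕ × ℕ × (Fin k → ℕ) × (Fin k → ℕ)) :=
  (Finset.Icc 1 n) ×ˢ
  (Fintype.piFinset fun i : Fin k => if i.1 = 0 then ({0} : Finset ℕ) else Finset.range k) ×ˢ
  (Fintype.piFinset fun m : Fin k => if m.1 < M₁ then Finset.range B else {0}) ×ˢ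
  Finset.range k ×ˢ Finset.range k ×ˢ Finset.range 2 ×ˢ
  (Fintype.piFinset fun i : Fin k => if i.1 = 0 then ({0} : Finset ℕ) else Finset.range (2*k)) ×ˢ
  (Fintype.piFinset fun m : Fin k => if m.1 < M₂ then Finset.range B else {0})

lemma dcode_zero {t : Fin k → ℕ} {W : ℕ → ℕ} {CE : Finset (Sym2 ℕ)} {i : Fin k}
    (h : i.1 = 0) : dcode t W CE i = 0 := by
  unfold dcode
  rw [if_pos h]

lemma dcode_lt_2k (hk : 0 < k) {t : Fin k → ℕ} {W : ℕ → ℕ} {CE : Finset (Sym2 ℕ)}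
    (hCE : CE ⊆ (tupleEdges t).toFinset) (i : Fin k) : dcode t W CE i < 2*k := by
  unfold dcode
  by_cases h0 : i.1 = 0
  · rw [if_pos h0]; omega
  rw [if_neg h0]
  by_cases hC : s(W (i.1-1), W i.1) ∈ CE
  · rw [if_pos hC]
    have := (cpos_spec hk (hCE hC)).1
    omega
  rw [if_neg hC]
  by_cases hN : isNew W i.1
  · rw [if_pos hN]
    have := i.2
    omega
  · rw [if_neg hN]
    have h1 := (bptr_spec hN).1
    have := i.2
    omega

lemma dcode_lt_k (hk : 0 < k) {t : Fin k → ℕ} {W : ℕ → ℕ} (i : Fin k) :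
    dcode t W (∅ : Finset (Sym2 ℕ)) i < k := by
  unfold dcode
  by_cases h0 : i.1 = 0
  · rw [if_pos h0]; omega
  rw [if_neg h0, if_neg (Finset.notMem_empty _)]
  by_cases hN : isNew W i.1
  · rw [if_pos hN]; exact i.2
  · rw [if_neg hN]
    have h1 := (bptr_spec hN).1
    have := i.2
    omega

lemma mem_pi_d {W : ℕ → ℕ} {t : Fin k → ℕ} {CE : Finset (Sym2 ℕ)} {m : ℕ}
    (hbound : ∀ i : Fin k, i.1 ≠ 0 → dcode t W CE i < m) :
    dcode t W CE ∈ Fintype.piFinset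
      (fun i : Fin k => if i.1 = 0 then ({0} : Finset ℕ) else Finset.range m) := by
  rw [Fintype.mem_piFinset]
  intro i
  by_cases h0 : i.1 = 0
  · rw [if_pos h0]
    simp [dcode_zero h0]
  · rw [if_neg h0]
    rw [Finset.mem_range]
    exact hbound i h0

lemma mem_pi_g {W : ℕ → ℕ} {CE : Finset (Sym2 ℕ)} {B M : ℕ}
    (hn : 0 < n) (hband : RMT.IsBandwidth n bn) (hB : 1 ≤ B) (hBb : bn ≤ B)
    (hIcc : ∀ r, r < k → W r ∈ Finset.Icc 1 n)
    (hrel : ∀ r, 1 ≤ r → r < k → W r ∈ relSet n bn (W (r-1)))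
    (hM : acount k W CE ≤ M) :
    gcode n bn k W CE ∈ Fintype.piFinset
      (fun m : Fin k => if m.1 < M then Finset.range B else ({0} : Finset ℕ)) := by
  rw [Fintype.mem_piFinset]
  intro m
  by_cases hm : m.1 < M
  · rw [if_pos hm, Finset.mem_range]
    exact gcode_lt hn hband hB hBb hIcc hrel m
  · rw [if_neg hm]
    have hz := gcode_zero (n := n) (bn := bn) (m := m) hM (by omega)
    simp [hz]

lemma pairCode_mem (hn : 0 < n) (hk : 0 < k) (hband : RMT.IsBandwidth n bn)
    {B M₁ M₂ : ℕ} (hB : 1 ≤ B) (hBb : bn ≤ B)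
    {p : (Fin k → ℕ) × (Fin k → ℕ)}
    (hp1 : p.1 ∈ relTuples n bn k) (hp2 : p.2 ∈ relTuples n bn k)
    (hpne : (commonSet p.1 p.2).Nonempty)
    (hM1 : acount k (Tx p.1) (∅ : Finset (Sym2 ℕ)) ≤ M₁)
    (hM2 : acount k (Wk p.1 p.2) (commonSet p.1 p.2) ≤ M₂) :
    pairCode n bn p ∈ codeFinset n k B M₁ M₂ := by
  rw [codeFinset, pairCode]
  simp only [Finset.mem_product]
  refine ⟨?_, ?_, ?_, ?_, ?_, ?_, ?_, ?_⟩
  · exact Tx_mem_Icc hk hp1 0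
  · exact mem_pi_d (fun i h0 => dcode_lt_k hk i)
  · exact mem_pi_g hn hband hB hBb (fun r _ => Tx_mem_Icc hk hp1 r)
      (fun r h1 _ => Tx_relSet hk hp1 h1) hM1
  · exact Finset.mem_range.mpr (jpos_spec hk hpne).1
  · exact Finset.mem_range.mpr (ipos_spec hk hpne).1
  · rw [Finset.mem_range, bitv]
    split <;> omega
  · exact mem_pi_d (fun i h0 => dcode_lt_2k hk Finset.inter_subset_left i)
  · exact mem_pi_g hn hband hB hBb (fun r _ => Wk_mem_Icc hk hp2 r)
      (fun r h1 _ => Wk_relSet hk hp2 h1) hM2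

lemma prod_pi_d_card (hk : 0 < k) (m : ℕ) :
    (Fintype.piFinset fun i : Fin k =>
      if i.1 = 0 then ({0} : Finset ℕ) else Finset.range m).card = m^(k-1) := by
  rw [Fintype.card_piFinset]
  have h1 : ∀ i : Fin k, ((if i.1 = 0 then ({0} : Finset ℕ) else Finset.range m)).card
      = if i.1 = 0 then 1 else m := by
    intro i
    split <;> simp
  rw [Finset.prod_congr rfl (fun i _ => h1 i), Finset.prod_ite]
  rw [Finset.prod_const_one, Finset.prod_const, one_mul]
  congr 1
  have h2 : (univ.filter fun i : Fin k => i.1 = 0) = {(⟨0, hk⟩ : Fin k)} := by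
    ext i
    simp [Fin.ext_iff]
  have h3 := Finset.card_filter_add_card_filter_not
    (s := (univ : Finset (Fin k))) (p := fun i : Fin k => i.1 = 0)
  rw [h2] at h3
  simp only [Finset.card_singleton, Finset.card_univ, Fintype.card_fin] at h3
  omega

lemma prod_pi_g_card (hB : 1 ≤ B) (M : ℕ) :
    (Fintype.piFinset fun m : Fin k =>
      if m.1 < M then Finset.range B else ({0} : Finset ℕ)).card ≤ B^M := by
  rw [Fintype.card_piFinset]
  have h1 : ∀ i : Fin k, ((if i.1 < M then Finset.range B else ({0} : Finset ℕ))).card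
      = if i.1 < M then B else 1 := by
    intro i
    split <;> simp
  rw [Finset.prod_congr rfl (fun i _ => h1 i), Finset.prod_ite]
  rw [Finset.prod_const, Finset.prod_const_one, mul_one]
  have h2 : (univ.filter fun i : Fin k => i.1 < M).card ≤ M := by
    have h3 := Finset.card_le_card_of_injOn
      (s := Finset.univ.filter fun i : Fin k => i.1 < M)
      (t := Finset.range M) (fun i : Fin k => i.1)
      (fun i hi => Finset.mem_range.mpr (Finset.mem_filter.mp hi).2)
      (fun a _ b _ hab => Fin.ext hab)
    simpa using h3
  exact Nat.pow_le_pow_right hB h2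

lemma card_codeFinset_le (hn : 0 < n) (hk : 0 < k) {B M₁ M₂ : ℕ} (hB : 1 ≤ B) :
    (codeFinset n k B M₁ M₂).card ≤ k^2 * (2*k)^(2*k) * n * B^(M₁+M₂) := by
  rw [codeFinset]
  simp only [Finset.card_product]
  rw [Nat.card_Icc, prod_pi_d_card hk k, prod_pi_d_card hk (2*k), Finset.card_range,
    Nat.add_sub_cancel]
  have g1 := prod_pi_g_card (k := k) hB M₁
  have g2 := prod_pi_g_card (k := k) hB M₂
  have key : ∀ c1 c2 : ℕ, c1 ≤ B^M₁ → c2 ≤ B^M₂ →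
      n * (k^(k-1) * (c1 * (k * (k * (2 * ((2*k)^(k-1) * c2)))))) ≤
        k^2 * (2*k)^(2*k) * n * B^(M₁+M₂) := by
    intro c1 c2 hc1 hc2
    calc n * (k^(k-1) * (c1 * (k * (k * (2 * ((2*k)^(k-1) * c2))))))
        ≤ n * (k^(k-1) * (B^M₁ * (k * (k * (2 * ((2*k)^(k-1) * B^M₂)))))) := by gcongr
    _ = (2 * (k^(k-1) * (2*k)^(k-1))) * (k*k) * n * (B^(M₁+M₂)) := by
        rw [pow_add]; ring
    _ ≤ ((2*k)^(2*k)) * (k*k) * n * (B^(M₁+M₂)) := by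
        have e1 : 2 * (k^(k-1) * (2*k)^(k-1)) ≤ (2*k)^(2*k) := by
          have e2 : (2*k)^(2*k) = (2*k)^2 * ((2*k)^(k-1) * (2*k)^(k-1)) := by
            rw [← pow_add, ← pow_add]; congr 1; omega
          rw [e2]
          have e3 : k^(k-1) ≤ (2*k)^(k-1) := Nat.pow_le_pow_left (by omega) _
          have e4 : 2 ≤ (2*k)^2 := by nlinarith
          exact Nat.mul_le_mul e4 (Nat.mul_le_mul e3 (le_refl _))
        exact Nat.mul_le_mul (Nat.mul_le_mul (Nat.mul_le_mul e1 (le_refl _)) (le_refl _))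
          (le_refl _)
    _ = k^2 * (2*k)^(2*k) * n * B^(M₁+M₂) := by ring
  exact key _ _ g1 g2

/-- The master counting bound. -/
lemma main_count (hn : 0 < n) (hk : 0 < k) (hband : RMT.IsBandwidth n bn)
    (M₁ M₂ : ℕ) (S : Finset ((Fin k → ℕ) × (Fin k → ℕ)))
    (hS : ∀ p ∈ S, p.1 ∈ relTuples n bn k ∧ p.2 ∈ relTuples n bn k ∧
      (commonSet p.1 p.2).Nonempty ∧ acount k (Tx p.1) (∅ : Finset (Sym2 ℕ)) ≤ M₁ ∧
      acount k (Wk p.1 p.2) (commonSet p.1 p.2) ≤ M₂) :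
    S.card ≤ k^2 * (2*k)^(2*k) * n * bn^(M₁+M₂) := by
  have hb1 : 1 ≤ bn := bandwidth_pos hn hband
  have h1 : S.card ≤ (codeFinset n k bn M₁ M₂).card := by
    refine Finset.card_le_card_of_injOn (pairCode n bn) ?_ ?_
    · intro p hp
      obtain ⟨hp1, hp2, hpne, hM1, hM2⟩ := hS p hp
      exact pairCode_mem hn hk hband hb1 (le_refl bn) hp1 hp2 hpne hM1 hM2
    · exact pairCode_injOn hk S (fun p hp => ⟨(hS p hp).1, (hS p hp).2.1, (hS p hp).2.2.1⟩)
  exact h1.trans (card_codeFinset_le hn hk hb1)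

end Aux
namespace Aux
open Finset RMT

variable {n bn k : ℕ}

lemma commonSet_comm (t t' : Fin k → ℕ) : commonSet t t' = commonSet t' t :=
  Finset.inter_comm _ _

lemma mem_Tcommon {u u' : Fin k → ℕ} {p : (Fin k → ℕ) × (Fin k → ℕ)} :
    p ∈ Tcommon n bn k u u' ↔ p.1 ∈ relTuples n bn k ∧ p.2 ∈ relTuples n bn k ∧
      sameProfile p.1 u ∧ sameProfile p.2 u' ∧ (commonSet p.1 p.2).Nonempty := by
  unfold commonSet
  rw [Tcommon, Finset.mem_filter, Finset.mem_product]
  tauto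

lemma mem_TcommonL {u u' : Fin k → ℕ} {l : ℕ} {p : (Fin k → ℕ) × (Fin k → ℕ)} :
    p ∈ TcommonL n bn k u u' l ↔ p.1 ∈ relTuples n bn k ∧ p.2 ∈ relTuples n bn k ∧
      sameProfile p.1 u ∧ sameProfile p.2 u' ∧ (commonSet p.1 p.2).Nonempty ∧
      (commonSet p.1 p.2).card = l := by
  unfold commonSet
  rw [TcommonL, Finset.mem_filter]
  have := mem_Tcommon (n := n) (bn := bn) (k := k) (u := u) (u' := u') (p := p)
  unfold commonSet at this
  rw [this]
  tauto

lemma Tcommon_card_swap (u u' : Fin k → ℕ) :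
    (Tcommon n bn k u u').card = (Tcommon n bn k u' u).card := by
  have key : ∀ v v' : Fin k → ℕ, (Tcommon n bn k v v').card ≤ (Tcommon n bn k v' v).card := by
    intro v v'
    refine Finset.card_le_card_of_injOn Prod.swap ?_ ?_
    · intro p hp
      simp only [Finset.mem_coe] at hp ⊢
      rw [mem_Tcommon] at hp ⊢
      obtain ⟨h1, h2, h3, h4, h5⟩ := hp
      exact ⟨h2, h1, h4, h3, by rwa [commonSet_comm] at h5⟩
    · exact fun a _ b _ h => Prod.swap_injective h
  exact le_antisymm (key u u') (key u' u)

lemma TcommonL_card_swap (u u' : Fin k → ℕ) (l : ℕ) :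
    (TcommonL n bn k u u' l).card = (TcommonL n bn k u' u l).card := by
  have key : ∀ v v' : Fin k → ℕ,
      (TcommonL n bn k v v' l).card ≤ (TcommonL n bn k v' v l).card := by
    intro v v'
    refine Finset.card_le_card_of_injOn Prod.swap ?_ ?_
    · intro p hp
      simp only [Finset.mem_coe] at hp ⊢
      rw [mem_TcommonL] at hp ⊢
      obtain ⟨h1, h2, h3, h4, h5, h6⟩ := hp
      exact ⟨h2, h1, h4, h3, by rwa [commonSet_comm] at h5, by rwa [commonSet_comm] at h6⟩
    · exact fun a _ b _ h => Prod.swap_injective h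
  exact le_antisymm (key u u') (key u' u)

lemma acount_t_le (hk : 0 < k) (t : Fin k → ℕ) :
    acount k (Tx t) (∅ : Finset (Sym2 ℕ)) ≤ (tupleEdges t).toFinset.card := by
  have hedge : ∀ r, 1 ≤ r → r < k → s(Tx t (r-1), Tx t r) ∈ (tupleEdges t).toFinset := by
    intro r h1 h2
    refine (mem_tupleEdges hk t _).mpr ⟨r-1, by omega, ?_⟩
    rw [Nat.sub_add_cancel h1]
  have h := acount_le_sub (W := Tx t) (CE := (∅ : Finset (Sym2 ℕ)))
    (E₀ := (tupleEdges t).toFinset) hedge (Finset.empty_subset _)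
  simpa using h

lemma acount_W_le (hk : 0 < k) {p : (Fin k → ℕ) × (Fin k → ℕ)} :
    acount k (Wk p.1 p.2) (commonSet p.1 p.2) + (commonSet p.1 p.2).card
      ≤ (tupleEdges p.2).toFinset.card :=
  acount_le_sub (fun r h1 _ => Wk_edge_mem hk h1) Finset.inter_subset_right

lemma partA_nat (hn : 0 < n) (hk : 0 < k) (hband : RMT.IsBandwidth n bn)
    (u u' : Fin k → ℕ) (hev : hasOnlyEvenEdges u) (hev' : hasOnlyEvenEdges u') :
    (Tcommon n bn k u u').card ≤ k^2 * (2*k)^(2*k) * n * bn^(k-1) := by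
  have hb1 := bandwidth_pos hn hband
  have h1 : (Tcommon n bn k u u').card ≤ k^2 * (2*k)^(2*k) * n *
      bn^((tupleEdges u).toFinset.card + ((tupleEdges u').toFinset.card - 1)) := by
    refine main_count hn hk hband _ _ _ ?_
    intro p hp
    rw [mem_Tcommon] at hp
    obtain ⟨hp1, hp2, hprof1, hprof2, hne⟩ := hp
    refine ⟨hp1, hp2, hne, ?_, ?_⟩
    · have h2 := acount_t_le hk p.1
      rwa [sameProfile_card hprof1] at h2
    · have h2 := acount_W_le hk (p := p)
      have h3 : 1 ≤ (commonSet p.1 p.2).card := Finset.card_pos.mpr hne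
      have h4 := sameProfile_card hprof2
      omega
  refine h1.trans (Nat.mul_le_mul_left _ (Nat.pow_le_pow_right hb1 ?_))
  have e1 := even_sum_counts hev
  have e2 := even_sum_counts hev'
  have e3 := one_le_edgecount hk u
  have e4 := one_le_edgecount hk u'
  omega

lemma partB_nat (hn : 0 < n) (hk : 0 < k) (hband : RMT.IsBandwidth n bn)
    (u u' : Fin k → ℕ) (hou : hasOddEdge u) :
    (Tcommon n bn k u u').card ≤ k^2 * (2*k)^(2*k) * n *
      bn^(((tupleEdges u).toFinset.card - 1) + ((tupleEdges u').toFinset.card - 1)) := by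
  refine main_count hn hk hband _ _ _ ?_
  intro p hp
  rw [mem_Tcommon] at hp
  obtain ⟨hp1, hp2, hprof1, hprof2, hne⟩ := hp
  refine ⟨hp1, hp2, hne, ?_, ?_⟩
  · have h2 := acount_add_one_le hk p.1 (hasOdd_transfer hprof1 hou)
    have h4 := sameProfile_card hprof1
    omega
  · have h2 := acount_W_le hk (p := p)
    have h3 : 1 ≤ (commonSet p.1 p.2).card := Finset.card_pos.mpr hne
    have h4 := sameProfile_card hprof2
    omega

lemma partC_nat (hn : 0 < n) (hk : 0 < k) (hband : RMT.IsBandwidth n bn)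
    (u u' : Fin k → ℕ) (hou : hasOddEdge u) (l : ℕ) :
    (TcommonL n bn k u u' l).card ≤ k^2 * (2*k)^(2*k) * n *
      bn^(((tupleEdges u).toFinset.card - 1) + ((tupleEdges u').toFinset.card - l)) := by
  refine main_count hn hk hband _ _ _ ?_
  intro p hp
  rw [mem_TcommonL] at hp
  obtain ⟨hp1, hp2, hprof1, hprof2, hne, hcard⟩ := hp
  refine ⟨hp1, hp2, hne, ?_, ?_⟩
  · have h2 := acount_add_one_le hk p.1 (hasOdd_transfer hprof1 hou)
    have h4 := sameProfile_card hprof1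
    omega
  · have h2 := acount_W_le hk (p := p)
    have h4 := sameProfile_card hprof2
    omega

end Aux
open Aux in
/-- Bounds on the number of pairs of tuples with prescribed profiles
sharing at least one (resp. exactly `l`) common edges. -/
theorem stmt17 (b : ℕ → ℕ) (hband : ∀ m, 1 ≤ m → IsBandwidth m (b m))
    (n k : ℕ) (hk : 0 < k) (hn : 0 < n) (u u' : Fin k → ℕ)
    (hu : u ∈ relTuples n (b n) k) (hu' : u' ∈ relTuples n (b n) k) :
    (hasOnlyEvenEdges u → hasOnlyEvenEdges u' →
      ((Tcommon n (b n) k u u').card : ℝ) ≤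
        (k : ℝ) ^ 2 * (2 * (k : ℝ)) ^ (2 * k) * (n : ℝ) * (b n : ℝ) ^ ((k : ℤ) - 1)) ∧
    ((hasOddEdge u ∨ hasOddEdge u') →
      ((Tcommon n (b n) k u u').card : ℝ) ≤
        (k : ℝ) ^ 2 * (2 * (k : ℝ)) ^ (2 * k) * (n : ℝ) *
          (b n : ℝ) ^ ((↑(∑ l ∈ Finset.Icc 1 k, kappa u l) : ℤ) +
            (↑(∑ l ∈ Finset.Icc 1 k, kappa u' l) : ℤ) - 2)) ∧
    ((hasOddEdge u ∨ hasOddEdge u') → ∀ l ∈ Finset.Icc 1 k,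
      ((TcommonL n (b n) k u u' l).card : ℝ) ≤
        (k : ℝ) ^ 2 * (2 * (k : ℝ)) ^ (2 * k) * (n : ℝ) *
          (b n : ℝ) ^ ((↑(∑ l' ∈ Finset.Icc 1 k, kappa u l') : ℤ) +
            (↑(∑ l' ∈ Finset.Icc 1 k, kappa u' l') : ℤ) - (l : ℤ) - 1)) := by
  have hband' : IsBandwidth n (b n) := hband n (by omega)
  have hb1 : 1 ≤ b n := bandwidth_pos hn hband'
  have hcu := sum_kappa u
  have hcu' := sum_kappa u'
  have he1 := one_le_edgecount hk u
  have he1' := one_le_edgecount hk u'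
  refine ⟨?_, ?_, ?_⟩
  · -- part (a)
    intro hev hev'
    have hA := partA_nat hn hk hband' u u' hev hev'
    have hz : ((k:ℤ) - 1) = ((k - 1 : ℕ) : ℤ) := by omega
    rw [hz, zpow_natCast]
    calc ((Tcommon n (b n) k u u').card : ℝ)
        ≤ ((k^2 * (2*k)^(2*k) * n * (b n)^(k-1) : ℕ) : ℝ) := by exact_mod_cast hA
    _ = (k:ℝ)^2 * (2*(k:ℝ))^(2*k) * (n:ℝ) * ((b n : ℝ))^(k-1) := by push_cast; ring
  · -- part (b)
    intro hodd
    have hz : ((↑(∑ l ∈ Finset.Icc 1 k, kappa u l) : ℤ) +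
        (↑(∑ l ∈ Finset.Icc 1 k, kappa u' l) : ℤ) - 2)
        = ((((tupleEdges u).toFinset.card - 1)
            + ((tupleEdges u').toFinset.card - 1) : ℕ) : ℤ) := by
      omega
    rw [hz, zpow_natCast]
    rcases hodd with hou | hou'
    · have hB := partB_nat hn hk hband' u u' hou
      calc ((Tcommon n (b n) k u u').card : ℝ)
          ≤ ((k^2 * (2*k)^(2*k) * n * (b n)^(((tupleEdges u).toFinset.card - 1)
              + ((tupleEdges u').toFinset.card - 1)) : ℕ) : ℝ) := by exact_mod_cast hB
      _ = _ := by push_cast; ring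
    · have hB := partB_nat hn hk hband' u' u hou'
      rw [Nat.add_comm ((tupleEdges u').toFinset.card - 1)
        ((tupleEdges u).toFinset.card - 1)] at hB
      rw [show ((Tcommon n (b n) k u u').card : ℝ)
          = ((Tcommon n (b n) k u' u).card : ℝ) by rw [Tcommon_card_swap]]
      calc ((Tcommon n (b n) k u' u).card : ℝ)
          ≤ ((k^2 * (2*k)^(2*k) * n * (b n)^(((tupleEdges u).toFinset.card - 1)
              + ((tupleEdges u').toFinset.card - 1)) : ℕ) : ℝ) := by exact_mod_cast hB
      _ = _ := by push_cast; ring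
  · -- part (c)
    intro hodd l hl
    rw [Finset.mem_Icc] at hl
    rcases Finset.eq_empty_or_nonempty (TcommonL n (b n) k u u' l) with hemp | hne
    · rw [hemp]
      simp only [Finset.card_empty, Nat.cast_zero]
      have hb0 : (0:ℝ) < (b n : ℝ) := by exact_mod_cast hb1
      positivity
    · obtain ⟨p, hp⟩ := hne
      rw [mem_TcommonL] at hp
      obtain ⟨hp1, hp2, hprof1, hprof2, hne2, hcard⟩ := hp
      have hle1 : l ≤ (tupleEdges u).toFinset.card := by
        have h5 : (commonSet p.1 p.2).card ≤ (tupleEdges p.1).toFinset.card :=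
          Finset.card_le_card Finset.inter_subset_left
        have h6 := sameProfile_card hprof1
        omega
      have hle2 : l ≤ (tupleEdges u').toFinset.card := by
        have h5 : (commonSet p.1 p.2).card ≤ (tupleEdges p.2).toFinset.card :=
          Finset.card_le_card Finset.inter_subset_right
        have h6 := sameProfile_card hprof2
        omega
      have hz : ((↑(∑ l' ∈ Finset.Icc 1 k, kappa u l') : ℤ) +
          (↑(∑ l' ∈ Finset.Icc 1 k, kappa u' l') : ℤ) - (l : ℤ) - 1)
          = ((((tupleEdges u).toFinset.card - 1)
              + ((tupleEdges u').toFinset.card - l) : ℕ) : ℤ) := by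
        omega
      rw [hz, zpow_natCast]
      rcases hodd with hou | hou'
      · have hC := partC_nat hn hk hband' u u' hou l
        calc ((TcommonL n (b n) k u u' l).card : ℝ)
            ≤ ((k^2 * (2*k)^(2*k) * n * (b n)^(((tupleEdges u).toFinset.card - 1)
                + ((tupleEdges u').toFinset.card - l)) : ℕ) : ℝ) := by exact_mod_cast hC
        _ = _ := by push_cast; ring
      · have hC := partC_nat hn hk hband' u' u hou' l
        have hexp : ((tupleEdges u').toFinset.card - 1)
            + ((tupleEdges u).toFinset.card - l)
            = ((tupleEdges u).toFinset.card - 1)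
              + ((tupleEdges u').toFinset.card - l) := by omega
        rw [hexp] at hC
        rw [show ((TcommonL n (b n) k u u' l).card : ℝ)
            = ((TcommonL n (b n) k u' u l).card : ℝ) by rw [TcommonL_card_swap]]
        calc ((TcommonL n (b n) k u' u l).card : ℝ)
            ≤ ((k^2 * (2*k)^(2*k) * n * (b n)^(((tupleEdges u).toFinset.card - 1)
                + ((tupleEdges u').toFinset.card - l)) : ℕ) : ℝ) := by exact_mod_cast hC
        _ = _ := by push_cast; ring

end RMT
end
end
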